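/- arXiv:2403.19630 — 5 statements merged into one kernel-verified Lean document; each statement's English description precedes it below -/
import Mathlib

section
/- For every nonzero real number x, |1/sinh(x)² − 1/x²| ≤ 1/3. -/
open Real Nat

/-- Termwise series comparison: `sinh x - x ≤ x^2/6 * sinh x` for `0 ≤ x`. -/
lemma sinh_key {x : ℝ} (hx : 0 ≤ x) : Real.sinh x ≤ x + x ^ 2 / 6 * Real.sinh x := by
  have hs := Real.hasSum_sinh x
  have h1 : HasSum (fun n : ℕ => x ^ (2 * (n + 1) + 1) / ((2 * (n + 1) + 1)! : ℝ))
      (Real.sinh x - x) := by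
    have h2 := (hasSum_nat_add_iff'
      (f := fun n : ℕ => x ^ (2 * n + 1) / ((2 * n + 1)! : ℝ)) 1).mpr hs
    simpa using h2
  have h3 : HasSum (fun n : ℕ => x ^ 2 / 6 * (x ^ (2 * n + 1) / ↑(2 * n + 1)!))
      (x ^ 2 / 6 * Real.sinh x) := hs.mul_left _
  have hle : Real.sinh x - x ≤ x ^ 2 / 6 * Real.sinh x := by
    refine hasSum_le (fun n => ?_) h1 h3
    have hxp : (0:ℝ) ≤ x ^ (2 * n + 3) := pow_nonneg hx _
    have hfac : (6:ℝ) * ((2 * n + 1)! : ℝ) ≤ ((2 * (n + 1) + 1)! : ℝ) := by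
      have : (2 * (n + 1) + 1)! = (2 * n + 3) * ((2 * n + 2) * (2 * n + 1)!) := by
        have h : 2 * (n + 1) + 1 = (2 * n + 2) + 1 := by ring
        rw [h, Nat.factorial_succ, Nat.factorial_succ]
      rw [this]
      push_cast
      have hF : (0:ℝ) < ((2 * n + 1)! : ℝ) := Nat.cast_pos.mpr (Nat.factorial_pos _)
      have hn : (0:ℝ) ≤ (n:ℝ) := Nat.cast_nonneg n
      have h6 : (6:ℝ) ≤ (2 * (n:ℝ) + 3) * (2 * (n:ℝ) + 2) := by nlinarith
      nlinarith [mul_le_mul_of_nonneg_right h6 hF.le]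
    have key : x ^ (2 * (n + 1) + 1) / ((2 * (n + 1) + 1)! : ℝ) ≤ x ^ (2 * n + 3) / (6 * ((2 * n + 1)! : ℝ)) := by
      have h25 : 2 * (n + 1) + 1 = 2 * n + 3 := by ring
      rw [h25]
      apply div_le_div_of_nonneg_left hxp
      · positivity
      · exact hfac
    refine key.trans (le_of_eq ?_)
    field_simp
    ring
  linarith

lemma aux_pos {x : ℝ} (hx : 0 < x) : |1 / (Real.sinh x) ^ 2 - 1 / x ^ 2| ≤ 1 / 3 := by
  have hsx : x < Real.sinh x := Real.self_lt_sinh_iff.mpr hx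
  have hs0 : 0 < Real.sinh x := hx.trans hsx
  have hx2 : 0 < x ^ 2 := by positivity
  have hs2 : 0 < Real.sinh x ^ 2 := by positivity
  have hlt : 1 / Real.sinh x ^ 2 ≤ 1 / x ^ 2 := by
    apply one_div_le_one_div_of_le hx2
    nlinarith
  rw [abs_of_nonpos (by linarith), neg_sub]
  -- goal: 1 / x^2 - 1 / sinh x ^ 2 ≤ 1/3
  by_cases h6 : 6 ≤ x ^ 2
  · have : 1 / x ^ 2 ≤ 1 / 6 := by
      apply one_div_le_one_div_of_le (by norm_num) h6
    have : (0:ℝ) < 1 / Real.sinh x ^ 2 := by positivity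
    linarith
  · push_neg at h6
    have hpos : 0 < 1 - x ^ 2 / 6 := by linarith
    have hineq : Real.sinh x * (1 - x ^ 2 / 6) ≤ x := by
      have := sinh_key hx.le
      nlinarith
    have ha : 0 ≤ Real.sinh x * (1 - x ^ 2 / 6) := by positivity
    have hsq : Real.sinh x ^ 2 * (1 - x ^ 2 / 6) ^ 2 ≤ x ^ 2 := by
      nlinarith [mul_self_le_mul_self ha hineq]
    have hdiv : (1 - x ^ 2 / 6) ^ 2 / x ^ 2 ≤ 1 / Real.sinh x ^ 2 := by
      rw [div_le_div_iff₀ hx2 hs2]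
      nlinarith
    have expand : 1 / x ^ 2 - (1 - x ^ 2 / 6) ^ 2 / x ^ 2 = 1 / 3 - x ^ 2 / 36 := by
      field_simp
      ring
    nlinarith

theorem stmt2 (x : ℝ) (hx : x ≠ 0) :
    |1 / (Real.sinh x) ^ 2 - 1 / x ^ 2| ≤ 1 / 3 := by
  rcases hx.lt_or_gt with h | h
  · have := aux_pos (x := -x) (by linarith)
    simpa [Real.sinh_neg] using this
  · exact aux_pos h
end

section
/- For every real number t ≥ 3, I_12(4π√t) ≤ (7/4)·I_13(4π√t). -/
open Real

/-- The modified Bessel function of the first kind. -/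
noncomputable def besselI (ν x : ℝ) : ℝ :=
  ∑' k : ℕ, (x / 2) ^ (2 * (k : ℝ) + ν) / ((k.factorial : ℝ) * Real.Gamma ((k : ℝ) + ν + 1))

noncomputable def gg (y : ℝ) (n k : ℕ) : ℝ :=
  y ^ (2 * k + n) / ((k.factorial : ℝ) * ((k + n).factorial : ℝ))

lemma gg_nonneg (y : ℝ) (hy : 0 ≤ y) (n k : ℕ) : 0 ≤ gg y n k := by
  unfold gg; positivity

lemma summable_gg (y : ℝ) (hy : 0 ≤ y) (n : ℕ) : Summable (gg y n) := by
  have hsum : Summable (fun k : ℕ => y ^ n * ((y ^ 2) ^ k / (k.factorial : ℝ))) :=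
    (Real.summable_pow_div_factorial (y ^ 2)).mul_left _
  refine Summable.of_nonneg_of_le (gg_nonneg y hy n) (fun k => ?_) hsum
  unfold gg
  have h1 : y ^ (2 * k + n) = y ^ n * (y ^ 2) ^ k := by
    rw [← pow_mul, ← pow_add]; ring_nf
  rw [h1, mul_div_assoc]
  apply mul_le_mul_of_nonneg_left _ (by positivity)
  apply div_le_div_of_nonneg_left (by positivity) (by positivity)
  have h2 : (1 : ℝ) ≤ ((k + n).factorial : ℝ) := by
    exact_mod_cast Nat.one_le_iff_ne_zero.mpr (Nat.factorial_ne_zero _)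
  nlinarith [(Nat.cast_pos (α := ℝ)).mpr (Nat.factorial_pos k)]

lemma besselI_eq (y : ℝ) (hy : 0 < y) (n : ℕ) :
    besselI n (2 * y) = ∑' k, gg y n k := by
  unfold besselI gg
  refine tsum_congr fun k => ?_
  have h1 : 2 * y / 2 = y := by ring
  have h2 : 2 * (k : ℝ) + (n : ℝ) = ((2 * k + n : ℕ) : ℝ) := by push_cast; ring
  have h3 : (k : ℝ) + (n : ℝ) + 1 = ((k + n : ℕ) : ℝ) + 1 := by push_cast; ring
  rw [h1, h2, h3, Real.rpow_natCast, Real.Gamma_nat_eq_factorial]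

lemma rec_gg (y : ℝ) (hy : 0 < y) (n : ℕ) :
    (∑' k, gg y n k) =
      ((n + 1 : ℝ) / y) * (∑' k, gg y (n + 1) k) + ∑' k, gg y (n + 2) k := by
  have hs0 : Summable (gg y n) := summable_gg y hy.le n
  have hs1 : Summable (gg y (n + 1)) := summable_gg y hy.le (n + 1)
  have hs2 : Summable (gg y (n + 2)) := summable_gg y hy.le (n + 2)
  have key : ∀ k : ℕ, gg y n (k + 1) =
      ((n + 1 : ℝ) / y) * gg y (n + 1) (k + 1) + gg y (n + 2) k := by
    intro k
    unfold gg
    simp only [show 2 * (k + 1) + n = 2 * k + n + 2 from by omega,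
      show 2 * (k + 1) + (n + 1) = 2 * k + n + 3 from by omega,
      show 2 * k + (n + 2) = 2 * k + n + 2 from by omega,
      show k + 1 + n = k + n + 1 from by omega,
      show k + 1 + (n + 1) = k + n + 2 from by omega,
      show k + (n + 2) = k + n + 2 from by omega]
    have e1 : ((k + 1).factorial : ℝ) = (k + 1) * (k.factorial : ℝ) := by
      rw [Nat.factorial_succ]; push_cast; ring
    have e2 : ((k + n + 2).factorial : ℝ) = ((k : ℝ) + n + 2) * ((k + n + 1).factorial : ℝ) := by
      rw [show k + n + 2 = (k + n + 1) + 1 from rfl, Nat.factorial_succ]; push_cast; ring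
    have e3 : y ^ (2 * k + n + 3) = y ^ (2 * k + n + 2) * y := by rw [pow_succ]
    rw [e1, e2, e3]
    have f1 : (k.factorial : ℝ) ≠ 0 := Nat.cast_ne_zero.mpr (Nat.factorial_ne_zero _)
    have f2 : ((k + n + 1).factorial : ℝ) ≠ 0 := Nat.cast_ne_zero.mpr (Nat.factorial_ne_zero _)
    have f3 : ((k : ℝ) + 1) ≠ 0 := by positivity
    have f4 : ((k : ℝ) + n + 2) ≠ 0 := by positivity
    field_simp
    ring
  have shift0 := Summable.tsum_eq_zero_add hs0
  have shift1 := Summable.tsum_eq_zero_add hs1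
  have hs1' : Summable (fun k => gg y (n + 1) (k + 1)) := by
    rwa [summable_nat_add_iff 1]
  have hsum2 : (∑' k, gg y n (k + 1)) =
      ((n + 1 : ℝ) / y) * (∑' k, gg y (n + 1) (k + 1)) + ∑' k, gg y (n + 2) k := by
    rw [tsum_congr key, Summable.tsum_add (hs1'.mul_left _) hs2, tsum_mul_left]
  have h0 : gg y n 0 = ((n + 1 : ℝ) / y) * gg y (n + 1) 0 := by
    unfold gg
    simp only [Nat.mul_zero, Nat.zero_add, Nat.factorial_zero]
    have e2 : ((n + 1).factorial : ℝ) = ((n : ℝ) + 1) * (n.factorial : ℝ) := by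
      rw [Nat.factorial_succ]; push_cast; ring
    have e3 : y ^ (n + 1) = y ^ n * y := by rw [pow_succ]
    rw [e2, e3]
    have f1 : (n.factorial : ℝ) ≠ 0 := Nat.cast_ne_zero.mpr (Nat.factorial_ne_zero _)
    have f4 : ((n : ℝ) + 1) ≠ 0 := by positivity
    field_simp
  rw [shift0, hsum2, shift1, h0]
  ring

set_option maxHeartbeats 1600000 in
lemma gg_term_bound (y : ℝ) (hy : 0 < y) (lam mu : ℝ) (k : ℕ)
    (hk : ((k : ℝ) + 1) * y ≤ lam * ((k : ℝ) + 1) * ((k : ℝ) + 16) + mu * y ^ 2) :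
    gg y 16 k ≤ lam * gg y 15 k + mu * gg y 15 (k + 1) := by
  unfold gg
  simp only [show 2 * (k + 1) + 15 = 2 * k + 17 from by omega,
    show k + 1 + 15 = k + 16 from by omega]
  have e1 : ((k + 1).factorial : ℝ) = ((k : ℝ) + 1) * (k.factorial : ℝ) := by
    rw [Nat.factorial_succ]; push_cast; ring
  have e2 : ((k + 16).factorial : ℝ) = ((k : ℝ) + 16) * ((k + 15).factorial : ℝ) := by
    rw [show k + 16 = (k + 15) + 1 from rfl, Nat.factorial_succ]; push_cast; ring
  have e3 : y ^ (2 * k + 16) = y ^ (2 * k + 15) * y := by rw [pow_succ]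
  have e4 : y ^ (2 * k + 17) = y ^ (2 * k + 15) * y ^ 2 := by rw [← pow_add]
  rw [e1, e2, e3, e4]
  have f1 : (0 : ℝ) < (k.factorial : ℝ) := by exact_mod_cast Nat.factorial_pos _
  have f2 : (0 : ℝ) < ((k + 15).factorial : ℝ) := by exact_mod_cast Nat.factorial_pos _
  have f3 : (0 : ℝ) < (k : ℝ) + 1 := by positivity
  have f4 : (0 : ℝ) < (k : ℝ) + 16 := by positivity
  have hp : (0 : ℝ) < y ^ (2 * k + 15) := by positivity
  rw [show y ^ (2 * k + 15) * y / ((k.factorial : ℝ) * (((k : ℝ) + 16) * ((k + 15).factorial : ℝ)))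
      = (y * ((k:ℝ)+1)) * (y ^ (2 * k + 15) / (((k:ℝ)+1) * (k.factorial : ℝ) * (((k : ℝ) + 16) * ((k + 15).factorial : ℝ)))) from by field_simp]
  rw [show lam * (y ^ (2 * k + 15) / ((k.factorial : ℝ) * ((k + 15).factorial : ℝ)))
      = (lam * (((k:ℝ)+1) * ((k:ℝ)+16))) * (y ^ (2 * k + 15) / (((k:ℝ)+1) * (k.factorial : ℝ) * (((k : ℝ) + 16) * ((k + 15).factorial : ℝ)))) from by field_simp]
  rw [show mu * (y ^ (2 * k + 15) * y ^ 2 / (((k:ℝ)+1) * (k.factorial : ℝ) * (((k : ℝ) + 16) * ((k + 15).factorial : ℝ))))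
      = (mu * y ^ 2) * (y ^ (2 * k + 15) / (((k:ℝ)+1) * (k.factorial : ℝ) * (((k : ℝ) + 16) * ((k + 15).factorial : ℝ)))) from by ring]
  rw [← add_mul]
  apply mul_le_mul_of_nonneg_right _ (by positivity)
  nlinarith [hk]

lemma sum_bound (y : ℝ) (hy : 0 < y) (lam mu : ℝ) (hmu : 0 ≤ mu)
    (hk : ∀ k : ℕ, ((k : ℝ) + 1) * y ≤ lam * ((k : ℝ) + 1) * ((k : ℝ) + 16) + mu * y ^ 2) :
    (∑' k, gg y 16 k) ≤ (lam + mu) * ∑' k, gg y 15 k := by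
  have hs15 : Summable (gg y 15) := summable_gg y hy.le 15
  have hs16 : Summable (gg y 16) := summable_gg y hy.le 16
  have hs15' : Summable (fun k => gg y 15 (k + 1)) := by rwa [summable_nat_add_iff 1]
  have h1 : (∑' k, gg y 16 k) ≤ ∑' k, (lam * gg y 15 k + mu * gg y 15 (k + 1)) := by
    refine Summable.tsum_le_tsum (fun k => gg_term_bound y hy lam mu k (hk k)) hs16 ?_
    exact (hs15.mul_left _).add (hs15'.mul_left _)
  have h2 : (∑' k, (lam * gg y 15 k + mu * gg y 15 (k + 1)))
      = lam * (∑' k, gg y 15 k) + mu * ∑' k, gg y 15 (k + 1) := by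
    rw [Summable.tsum_add (hs15.mul_left _) (hs15'.mul_left _), tsum_mul_left, tsum_mul_left]
  have h3 : (∑' k, gg y 15 (k + 1)) ≤ ∑' k, gg y 15 k := by
    have := Summable.tsum_eq_zero_add hs15
    have h0 : 0 ≤ gg y 15 0 := gg_nonneg y hy.le 15 0
    linarith
  have h4 : (0:ℝ) ≤ ∑' k, gg y 15 k := tsum_nonneg (gg_nonneg y hy.le 15)
  calc (∑' k, gg y 16 k) ≤ lam * (∑' k, gg y 15 k) + mu * ∑' k, gg y 15 (k + 1) := by
        rw [← h2]; exact h1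
    _ ≤ lam * (∑' k, gg y 15 k) + mu * ∑' k, gg y 15 k := by nlinarith [h3]
    _ = (lam + mu) * ∑' k, gg y 15 k := by ring

set_option maxHeartbeats 4000000 in
theorem stmt3 (t : ℝ) (ht : 3 ≤ t) :
    besselI 12 (4 * Real.pi * Real.sqrt t) ≤ (7 / 4) * besselI 13 (4 * Real.pi * Real.sqrt t) := by
  set y : ℝ := 2 * Real.pi * Real.sqrt t with hy_def
  have hst : (1.7320508 : ℝ) ≤ Real.sqrt t := by
    rw [show (1.7320508:ℝ) = Real.sqrt (1.7320508^2) from (Real.sqrt_sq (by norm_num)).symm]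
    apply Real.sqrt_le_sqrt; nlinarith
  have hpi : (3.141592 : ℝ) < Real.pi := Real.pi_gt_d6
  have hy : 0 < y := by
    have : (0:ℝ) < Real.sqrt t := lt_of_lt_of_le (by norm_num) hst
    positivity
  have hyl : (10.8827 : ℝ) ≤ y := by
    rw [hy_def]
    nlinarith [mul_nonneg (le_of_lt (sub_pos.mpr hpi)) (sub_nonneg.mpr hst)]
  have hx : 4 * Real.pi * Real.sqrt t = 2 * y := by rw [hy_def]; ring
  rw [hx]
  have h12 : besselI 12 (2 * y) = ∑' k, gg y 12 k := by
    have := besselI_eq y hy 12; norm_num at this; exact this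
  have h13 : besselI 13 (2 * y) = ∑' k, gg y 13 k := by
    have := besselI_eq y hy 13; norm_num at this; exact this
  rw [h12, h13]
  set A := ∑' k, gg y 12 k
  set B := ∑' k, gg y 13 k
  set C := ∑' k, gg y 14 k
  set D := ∑' k, gg y 15 k
  set E := ∑' k, gg y 16 k
  have R1 : A = (13 / y) * B + C := by
    have := rec_gg y hy 12; norm_num at this; exact this
  have R2 : B = (14 / y) * C + D := by
    have := rec_gg y hy 13; norm_num at this; exact this
  have R3 : C = (15 / y) * D + E := by
    have := rec_gg y hy 14; norm_num at this; exact this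
  have hB : (0:ℝ) ≤ B := tsum_nonneg (gg_nonneg y hy.le 13)
  have hD : (0:ℝ) ≤ D := tsum_nonneg (gg_nonneg y hy.le 15)
  have hyne : y ≠ 0 := ne_of_gt hy
  have hR1' : y * A = 13 * B + y * C := by
    rw [R1]; field_simp
  have hR2' : y * B = 14 * C + y * D := by
    rw [R2]; field_simp
  have hR3' : y * C = 15 * D + y * E := by
    rw [R3]; field_simp
  -- main bound : E ≤ σ * D, by cases on y
  have main : y * C ≤ (7 / 4 * y - 13) * B := by
    rcases le_or_gt y (57/5) with hcase | hcase
    · -- Case A : y ≤ 11.4, lam = 21/50, mu = 3/25, σ = 27/50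
      have hS : E ≤ (27/50) * D := by
        have := sum_bound y hy (21/50) (3/25) (by norm_num) (fun k => ?_)
        · norm_num at this; exact this
        · have hk0 : (0:ℝ) ≤ (k:ℝ) := Nat.cast_nonneg k
          nlinarith [sq_nonneg (84 * ((k:ℝ)+1) - 100 * y + 630),
            mul_nonneg (sub_nonneg.mpr hyl) (sub_nonneg.mpr hcase)]
      have hQ : (0:ℝ) < y^2 + 210 + 14 * (27/50) * y := by nlinarith
      have h5 : C * (y^2 + 210 + 14 * (27/50) * y) ≤ (15 + (27/50) * y) * y * B := by
        have hyE : y * E ≤ (27/50) * y * D := by nlinarith [hS]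
        have hyC : y * C ≤ (15 + (27/50) * y) * D := by nlinarith [hR3', hyE]
        have hyyC : y * (y * C) ≤ (15 + (27/50) * y) * (y * D) := by
          nlinarith [mul_le_mul_of_nonneg_left hyC hy.le]
        nlinarith [hyyC, hR2']
      have hPA : (0:ℝ) ≤ (7/4 * y - 13) * (y^2 + 210 + 14 * (27/50) * y)
          - (15 + (27/50) * y) * y^2 := by
        nlinarith [hyl, sq_nonneg (y - 10.8827), mul_nonneg (sub_nonneg.mpr hyl) (sq_nonneg (y - 10.8827))]
      have final : (y * C) * (y^2 + 210 + 14 * (27/50) * y)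
          ≤ ((7/4 * y - 13) * B) * (y^2 + 210 + 14 * (27/50) * y) := by
        nlinarith [mul_le_mul_of_nonneg_left h5 hy.le, mul_nonneg hPA hB]
      exact le_of_mul_le_mul_right final hQ
    · -- Case B : y ≥ 11.4, lam = mu = 1/2, σ = 1
      have hS : E ≤ 1 * D := by
        have := sum_bound y hy (1/2) (1/2) (by norm_num) (fun k => ?_)
        · norm_num at this ⊢; exact this
        · have hk0 : (0:ℝ) ≤ (k:ℝ) := Nat.cast_nonneg k
          nlinarith [sq_nonneg ((k:ℝ) + 1 - y)]
      have hQ : (0:ℝ) < y^2 + 210 + 14 * y := by nlinarith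
      have h5 : C * (y^2 + 210 + 14 * y) ≤ (15 + y) * y * B := by
        have hyE : y * E ≤ y * D := by nlinarith [hS]
        have hyC : y * C ≤ (15 + y) * D := by nlinarith [hR3', hyE]
        have hyyC : y * (y * C) ≤ (15 + y) * (y * D) := by
          nlinarith [mul_le_mul_of_nonneg_left hyC hy.le]
        nlinarith [hyyC, hR2']
      have hPB : (0:ℝ) ≤ (7/4 * y - 13) * (y^2 + 210 + 14 * y) - (15 + y) * y^2 := by
        nlinarith [hcase.le, sq_nonneg (y - 57/5), mul_nonneg (sub_nonneg.mpr hcase.le) (sq_nonneg (y - 57/5))]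
      have final : (y * C) * (y^2 + 210 + 14 * y)
          ≤ ((7/4 * y - 13) * B) * (y^2 + 210 + 14 * y) := by
        nlinarith [mul_le_mul_of_nonneg_left h5 hy.le, mul_nonneg hPB hB]
      exact le_of_mul_le_mul_right final hQ
  -- conclude
  have : y * A ≤ y * (7/4 * B) := by nlinarith [hR1', main]
  have := le_of_mul_le_mul_left this hy
  linarith
end

section
/- Let m ≥ 1 and let n, ℓ, ñ, ℓ̃ be integers with Δ = 4mn − ℓ² > 0 and Δ̃ = 4mñ − ℓ̃² < 0. Then the series Σ_{γ=2}^∞ Kl(Δ/(4m), Δ̃/(4m); γ, ψ)_{ℓℓ̃}·γ^{−1}·I_{23/2}(π√(Δ|Δ̃|)/(γm)) converges absolutely and the modulus of its sum is strictly less than (2/21)·I_{23/2}(π√(Δ|Δ̃|)/m). -/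
open Real

/-- The multiplier system `ψ(γ, δ)_{ℓ̃ℓ}` of the index-`m` theta functions, where
`α` is the inverse of `δ` modulo `γ` (taken in `[0, γ)`). -/
noncomputable def psiMult (m γ : ℕ) (δ : ℤ) (ℓt ℓ : ℤ) : ℂ :=
  (((2 * m * γ : ℕ) : ℂ) * Complex.I) ^ (-(1 / 2 : ℂ)) *
    ∑ T ∈ Finset.range γ,
      Complex.exp (2 * (Real.pi : ℂ) * Complex.I *
        ((((((δ : ZMod γ)⁻¹).val : ℕ) : ℂ) * ((ℓt : ℂ) - 2 * m * T) ^ 2) / (4 * m * γ)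
          - ((ℓ : ℂ) * ((ℓt : ℂ) - 2 * m * T)) / (2 * m * γ)
          + ((δ : ℂ) * (ℓ : ℂ) ^ 2) / (4 * m * γ)))

/-- The generalized Kloosterman sum `Kl(A, B; γ, ψ)_{ℓℓ̃}`: the sum runs over
`δ = -j` with `0 ≤ j < γ` and `gcd(j, γ) = 1`, and `α(δ, γ)` is the inverse of `δ` mod `γ`. -/
noncomputable def Kl (m : ℕ) (A B : ℚ) (γ : ℕ) (ℓ ℓt : ℤ) : ℂ :=
  ∑ j ∈ (Finset.range γ).filter fun j => Nat.gcd j γ = 1,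
    Complex.exp (2 * (Real.pi : ℂ) * Complex.I *
      (((((-(j : ℤ) : ZMod γ)⁻¹).val : ℕ) : ℂ) * (B : ℂ) / γ + ((-(j : ℤ) : ℤ) : ℂ) * (A : ℂ) / γ)) *
    psiMult m γ (-(j : ℤ)) ℓt ℓ


namespace Aux

noncomputable def bterm (x : ℝ) (k : ℕ) : ℝ :=
  (x / 2) ^ (2 * (k : ℝ) + 23 / 2) / ((k.factorial : ℝ) * Real.Gamma ((k : ℝ) + 23 / 2 + 1))

lemma besselI_eq (x : ℝ) : besselI (23 / 2) x = ∑' k, bterm x k := rfl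

lemma gamma_pos (k : ℕ) : 0 < Real.Gamma ((k : ℝ) + 23 / 2 + 1) :=
  Real.Gamma_pos_of_pos (by positivity)

lemma gamma_ge (k : ℕ) : Real.Gamma (25 / 2) ≤ Real.Gamma ((k : ℝ) + 23 / 2 + 1) := by
  induction k with
  | zero => norm_num
  | succ k ih =>
    have h : ((k + 1 : ℕ) : ℝ) + 23 / 2 + 1 = ((k : ℝ) + 23 / 2 + 1) + 1 := by push_cast; ring
    rw [h, Real.Gamma_add_one (by positivity)]
    nlinarith [gamma_pos k, ih]

lemma bterm_nonneg (x : ℝ) (hx : 0 ≤ x) (k : ℕ) : 0 ≤ bterm x k := by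
  unfold bterm
  have := gamma_pos k
  have h1 : (0:ℝ) ≤ (x / 2) ^ (2 * (k : ℝ) + 23 / 2) := Real.rpow_nonneg (by linarith) _
  positivity

lemma bterm_split (x : ℝ) (hx : 0 < x) (k : ℕ) :
    (x / 2) ^ (2 * (k : ℝ) + 23 / 2) = ((x / 2) ^ 2) ^ k * (x / 2) ^ (23 / 2 : ℝ) := by
  have hx2 : 0 < x / 2 := by linarith
  rw [Real.rpow_add hx2]
  congr 1
  rw [show (2 * (k : ℝ)) = ((2 * k : ℕ) : ℝ) by push_cast; ring, Real.rpow_natCast, pow_mul]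

lemma bterm_summable (x : ℝ) (hx : 0 < x) : Summable (bterm x) := by
  have hg25 : 0 < Real.Gamma (25 / 2) := Real.Gamma_pos_of_pos (by norm_num)
  apply Summable.of_nonneg_of_le (bterm_nonneg x hx.le)
    (f := fun k => ((x / 2) ^ 2) ^ k / (k.factorial : ℝ) * ((x / 2) ^ (23 / 2 : ℝ) / Real.Gamma (25 / 2)))
  · intro k
    unfold bterm
    rw [bterm_split x hx]
    have hfk : (0:ℝ) < (k.factorial : ℝ) := by positivity
    have hA : (0:ℝ) ≤ ((x / 2) ^ 2) ^ k * (x / 2) ^ (23 / 2 : ℝ) := by positivity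
    have heq : ((x / 2) ^ 2) ^ k / (k.factorial : ℝ) * ((x / 2) ^ (23 / 2 : ℝ) / Real.Gamma (25 / 2))
        = ((x / 2) ^ 2) ^ k * (x / 2) ^ (23 / 2 : ℝ) / ((k.factorial : ℝ) * Real.Gamma (25 / 2)) := by
      ring
    rw [heq]
    gcongr
    exact gamma_ge k
  · exact (Real.summable_pow_div_factorial _).mul_right _

lemma besselI_nonneg (x : ℝ) (hx : 0 ≤ x) : 0 ≤ besselI (23 / 2) x := by
  rw [besselI_eq]
  exact tsum_nonneg (bterm_nonneg x hx)

lemma besselI_pos (x : ℝ) (hx : 0 < x) : 0 < besselI (23 / 2) x := by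
  rw [besselI_eq]
  have h0 : 0 < bterm x 0 := by
    unfold bterm
    have : (0:ℝ) < (x / 2) ^ (2 * ((0:ℕ) : ℝ) + 23 / 2) := Real.rpow_pos_of_pos (by linarith) _
    have := gamma_pos 0
    simp only [Nat.factorial_zero, Nat.cast_one, one_mul]
    positivity
  exact h0.trans_le (Summable.le_tsum (bterm_summable x hx) 0 (fun j _ => bterm_nonneg x hx.le j))

lemma besselI_div_le (x c : ℝ) (hx : 0 < x) (hc : 1 ≤ c) :
    besselI (23 / 2) (x / c) ≤ 1 / c ^ 11 * besselI (23 / 2) x := by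
  have hc0 : 0 < c := by linarith
  have hxc : 0 < x / c := by positivity
  have hkey : ∀ k, bterm (x / c) k ≤ 1 / c ^ 11 * bterm x k := by
    intro k
    unfold bterm
    have hsplit : (x / c / 2) ^ (2 * (k : ℝ) + 23 / 2)
        = (x / 2) ^ (2 * (k : ℝ) + 23 / 2) * (1 / c) ^ (2 * (k : ℝ) + 23 / 2) := by
      rw [← Real.mul_rpow (by positivity) (by positivity)]
      congr 1
      field_simp
    have hexp : (1 / c) ^ (2 * (k : ℝ) + 23 / 2) ≤ (1 / c) ^ ((11 : ℕ) : ℝ) := by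
      apply Real.rpow_le_rpow_of_exponent_ge (by positivity)
        (by rw [div_le_one hc0]; linarith)
      push_cast
      have : (0:ℝ) ≤ (k : ℝ) := Nat.cast_nonneg k
      linarith
    rw [Real.rpow_natCast] at hexp
    rw [hsplit]
    have hb : (0:ℝ) ≤ (x / 2) ^ (2 * (k : ℝ) + 23 / 2) := Real.rpow_nonneg (by positivity) _
    have hd : (0:ℝ) < (k.factorial : ℝ) * Real.Gamma ((k : ℝ) + 23 / 2 + 1) := by
      have := gamma_pos k
      positivity
    rw [div_le_iff₀ hd]
    have h2 : (x / 2) ^ (2 * (k : ℝ) + 23 / 2) * (1 / c) ^ (2 * (k : ℝ) + 23 / 2)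
        ≤ (x / 2) ^ (2 * (k : ℝ) + 23 / 2) * (1 / c) ^ (11 : ℕ) :=
      mul_le_mul_of_nonneg_left hexp hb
    calc (x / 2) ^ (2 * (k : ℝ) + 23 / 2) * (1 / c) ^ (2 * (k : ℝ) + 23 / 2)
        ≤ (x / 2) ^ (2 * (k : ℝ) + 23 / 2) * (1 / c) ^ (11 : ℕ) := h2
      _ = 1 / c ^ 11 * ((x / 2) ^ (2 * (k : ℝ) + 23 / 2) / ((k.factorial : ℝ) * Real.Gamma ((k : ℝ) + 23 / 2 + 1)))
          * ((k.factorial : ℝ) * Real.Gamma ((k : ℝ) + 23 / 2 + 1)) := by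
          field_simp
  rw [besselI_eq, besselI_eq, ← tsum_mul_left]
  exact Summable.tsum_le_tsum hkey (bterm_summable _ hxc) ((bterm_summable x hx).mul_left _)

end Aux

namespace Aux2

lemma norm_exp_real (r : ℝ) : ‖Complex.exp (2 * (Real.pi : ℂ) * Complex.I * (r : ℂ))‖ = 1 := by
  rw [Complex.norm_exp]
  have : (2 * (Real.pi : ℂ) * Complex.I * (r : ℂ)).re = 0 := by
    simp [Complex.mul_re, Complex.mul_im]
  rw [this, Real.exp_zero]

lemma norm_cpow_le (N : ℕ) (hN : 1 ≤ N) :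
    ‖((N : ℂ) * Complex.I) ^ (-(1 / 2 : ℂ))‖ ≤ 1 := by
  have hz : (N : ℂ) * Complex.I ≠ 0 := by
    simp [Complex.ext_iff, Complex.I_ne_zero]
    positivity
  rw [Complex.norm_cpow_of_ne_zero hz]
  have him : (-(1 / 2 : ℂ)).im = 0 := by norm_num
  have hre : (-(1 / 2 : ℂ)).re = -(1/2 : ℝ) := by norm_num
  rw [him, hre, mul_zero, Real.exp_zero, div_one]
  have habs : ‖(N : ℂ) * Complex.I‖ = (N : ℝ) := by
    simp [map_mul]
  rw [habs]
  apply Real.rpow_le_one_of_one_le_of_nonpos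
  · exact_mod_cast hN
  · norm_num

end Aux2

namespace Aux3

lemma norm_psi_le (m γ : ℕ) (hm : 1 ≤ m) (hγ : 1 ≤ γ) (δ ℓt ℓ : ℤ) :
    ‖psiMult m γ δ ℓt ℓ‖ ≤ (γ : ℝ) := by
  unfold psiMult
  rw [norm_mul]
  have h1 : ‖(((2 * m * γ : ℕ) : ℂ) * Complex.I) ^ (-(1 / 2 : ℂ))‖ ≤ 1 :=
    Aux2.norm_cpow_le _ (Nat.mul_pos (Nat.mul_pos (by norm_num) hm) hγ)
  have h2 : ‖∑ T ∈ Finset.range γ,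
      Complex.exp (2 * (Real.pi : ℂ) * Complex.I *
        ((((((δ : ZMod γ)⁻¹).val : ℕ) : ℂ) * ((ℓt : ℂ) - 2 * m * T) ^ 2) / (4 * m * γ)
          - ((ℓ : ℂ) * ((ℓt : ℂ) - 2 * m * T)) / (2 * m * γ)
          + ((δ : ℂ) * (ℓ : ℂ) ^ 2) / (4 * m * γ)))‖ ≤ (γ : ℝ) := by
    calc _ ≤ ∑ T ∈ Finset.range γ, ‖Complex.exp (2 * (Real.pi : ℂ) * Complex.I *
        ((((((δ : ZMod γ)⁻¹).val : ℕ) : ℂ) * ((ℓt : ℂ) - 2 * m * T) ^ 2) / (4 * m * γ)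
          - ((ℓ : ℂ) * ((ℓt : ℂ) - 2 * m * T)) / (2 * m * γ)
          + ((δ : ℂ) * (ℓ : ℂ) ^ 2) / (4 * m * γ)))‖ := norm_sum_le _ _
    _ = ∑ T ∈ Finset.range γ, 1 := by
        apply Finset.sum_congr rfl
        intro T _
        set α : ℕ := ((δ : ZMod γ)⁻¹).val
        have hr : ((((α : ℝ) * ((ℓt : ℝ) - 2 * m * T) ^ 2) / (4 * m * γ)
            - ((ℓ : ℝ) * ((ℓt : ℝ) - 2 * m * T)) / (2 * m * γ)
            + ((δ : ℝ) * (ℓ : ℝ) ^ 2) / (4 * m * γ) : ℝ) : ℂ)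
            = (((α : ℕ) : ℂ) * ((ℓt : ℂ) - 2 * m * T) ^ 2) / (4 * m * γ)
              - ((ℓ : ℂ) * ((ℓt : ℂ) - 2 * m * T)) / (2 * m * γ)
              + ((δ : ℂ) * (ℓ : ℂ) ^ 2) / (4 * m * γ) := by
          push_cast
          ring
        rw [← hr, Aux2.norm_exp_real]
    _ = (γ : ℝ) := by simp
  calc ‖(((2 * m * γ : ℕ) : ℂ) * Complex.I) ^ (-(1 / 2 : ℂ))‖ * ‖_‖
      ≤ 1 * (γ : ℝ) := mul_le_mul h1 h2 (norm_nonneg _) zero_le_one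
    _ = (γ : ℝ) := one_mul _


lemma norm_Kl_le (m : ℕ) (hm : 1 ≤ m) (A B : ℚ) (γ : ℕ) (hγ : 1 ≤ γ) (ℓ ℓt : ℤ) :
    ‖Kl m A B γ ℓ ℓt‖ ≤ (γ : ℝ) ^ 2 := by
  unfold Kl
  calc ‖∑ j ∈ (Finset.range γ).filter fun j => Nat.gcd j γ = 1, _‖
      ≤ ∑ j ∈ (Finset.range γ).filter fun j => Nat.gcd j γ = 1,
        ‖Complex.exp (2 * (Real.pi : ℂ) * Complex.I *
          (((((-(j : ℤ) : ZMod γ)⁻¹).val : ℕ) : ℂ) * (B : ℂ) / γ + ((-(j : ℤ) : ℤ) : ℂ) * (A : ℂ) / γ)) *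
          psiMult m γ (-(j : ℤ)) ℓt ℓ‖ := norm_sum_le _ _
    _ ≤ ∑ j ∈ (Finset.range γ).filter fun j => Nat.gcd j γ = 1, (γ : ℝ) := by
        apply Finset.sum_le_sum
        intro j _
        rw [norm_mul]
        set α : ℕ := ((-(j : ℤ) : ZMod γ)⁻¹).val
        have hr : ((((α : ℝ) * (B : ℝ) / γ + (-(j : ℤ) : ℝ) * (A : ℝ) / γ) : ℝ) : ℂ)
            = (((α : ℕ) : ℂ) * (B : ℂ) / γ + ((-(j : ℤ) : ℤ) : ℂ) * (A : ℂ) / γ) := by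
          push_cast
          ring
        rw [← hr, Aux2.norm_exp_real, one_mul]
        exact norm_psi_le m γ hm hγ _ ℓt ℓ
    _ ≤ (γ : ℝ) ^ 2 := by
        rw [Finset.sum_const, nsmul_eq_mul]
        have hcard : ((Finset.range γ).filter fun j => Nat.gcd j γ = 1).card ≤ γ := by
          calc _ ≤ (Finset.range γ).card := Finset.card_filter_le _ _
            _ = γ := Finset.card_range γ
        have : (((Finset.range γ).filter fun j => Nat.gcd j γ = 1).card : ℝ) ≤ (γ : ℝ) := by
          exact_mod_cast hcard
        nlinarith [Nat.cast_nonneg (α := ℝ) γ]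


lemma partial_sum_le (N : ℕ) :
    ∑ γ ∈ Finset.range N, 1 / ((γ : ℝ) + 2) ^ 10 ≤ 1 / 256 - 1 / (256 * ((N : ℝ) + 1)) := by
  induction N with
  | zero => simp
  | succ N ih =>
    rw [Finset.sum_range_succ]
    have h2 : (2 : ℝ) ≤ (N : ℝ) + 2 := by
      have : (0:ℝ) ≤ (N : ℝ) := Nat.cast_nonneg N
      linarith
    have h8 : (2 : ℝ) ^ 8 ≤ ((N : ℝ) + 2) ^ 8 := pow_le_pow_left₀ (by norm_num) h2 8
    have hkey : 256 * (((N : ℝ) + 1) * ((N : ℝ) + 2)) ≤ ((N : ℝ) + 2) ^ 10 := by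
      have hNN : (0:ℝ) ≤ (N : ℝ) := Nat.cast_nonneg N
      nlinarith [sq_nonneg ((N:ℝ)+2)]
    have hpos : (0:ℝ) < 256 * (((N : ℝ) + 1) * ((N : ℝ) + 2)) := by positivity
    have h3 : 1 / ((N : ℝ) + 2) ^ 10 ≤ 1 / (256 * (((N : ℝ) + 1) * ((N : ℝ) + 2))) :=
      one_div_le_one_div_of_le hpos hkey
    have h4 : 1 / (256 * (((N : ℝ) + 1) * ((N : ℝ) + 2)))
        = 1 / (256 * ((N : ℝ) + 1)) - 1 / (256 * ((N : ℝ) + 2)) := by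
      have hN1 : ((N : ℝ) + 1) ≠ 0 := by positivity
      have hN2 : ((N : ℝ) + 2) ≠ 0 := by positivity
      field_simp
      ring
    have hcast : ((N + 1 : ℕ) : ℝ) + 1 = (N : ℝ) + 2 := by push_cast; ring
    rw [hcast]
    linarith

lemma partial_sum_le' (N : ℕ) :
    ∑ γ ∈ Finset.range N, 1 / ((γ : ℝ) + 2) ^ 10 ≤ 1 / 256 := by
  have := partial_sum_le N
  have hp : (0:ℝ) < 1 / (256 * ((N : ℝ) + 1)) := by positivity
  linarith

lemma summable_b : Summable (fun γ : ℕ => 1 / ((γ : ℝ) + 2) ^ 10) :=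
  summable_of_sum_range_le (fun n => by positivity) partial_sum_le'

lemma tsum_b_le : ∑' γ : ℕ, 1 / ((γ : ℝ) + 2) ^ 10 ≤ 1 / 256 :=
  Real.tsum_le_of_sum_range_le (fun n => by positivity) partial_sum_le'

end Aux3

theorem stmt4 (m : ℕ) (hm : 1 ≤ m) (n ℓ nt ℓt : ℤ)
    (hΔ : 0 < 4 * (m : ℤ) * n - ℓ ^ 2) (hΔt : 4 * (m : ℤ) * nt - ℓt ^ 2 < 0) :
    Summable (fun γ : ℕ =>
      ‖Kl m (((4 * (m : ℤ) * n - ℓ ^ 2 : ℤ) : ℚ) / (4 * m))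
          (((4 * (m : ℤ) * nt - ℓt ^ 2 : ℤ) : ℚ) / (4 * m)) (γ + 2) ℓ ℓt *
        (((γ : ℕ) + 2 : ℕ) : ℂ)⁻¹ *
        (besselI (23 / 2)
          (Real.pi * Real.sqrt (((4 * (m : ℤ) * n - ℓ ^ 2 : ℤ) : ℝ) *
            |((4 * (m : ℤ) * nt - ℓt ^ 2 : ℤ) : ℝ)|) / (((γ : ℕ) + 2 : ℕ) * m)) : ℝ)‖) ∧
    ‖∑' γ : ℕ,
        Kl m (((4 * (m : ℤ) * n - ℓ ^ 2 : ℤ) : ℚ) / (4 * m))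
          (((4 * (m : ℤ) * nt - ℓt ^ 2 : ℤ) : ℚ) / (4 * m)) (γ + 2) ℓ ℓt *
        (((γ : ℕ) + 2 : ℕ) : ℂ)⁻¹ *
        (besselI (23 / 2)
          (Real.pi * Real.sqrt (((4 * (m : ℤ) * n - ℓ ^ 2 : ℤ) : ℝ) *
            |((4 * (m : ℤ) * nt - ℓt ^ 2 : ℤ) : ℝ)|) / (((γ : ℕ) + 2 : ℕ) * m)) : ℝ)‖ <
      (2 / 21) * besselI (23 / 2)
        (Real.pi * Real.sqrt (((4 * (m : ℤ) * n - ℓ ^ 2 : ℤ) : ℝ) *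
          |((4 * (m : ℤ) * nt - ℓt ^ 2 : ℤ) : ℝ)|) / m) := by
  set Δ : ℤ := 4 * (m : ℤ) * n - ℓ ^ 2 with hΔdef
  set Δt : ℤ := 4 * (m : ℤ) * nt - ℓt ^ 2 with hΔtdef
  set D : ℝ := ((Δ : ℝ)) * |((Δt : ℝ))| with hDdef
  set x : ℝ := Real.pi * Real.sqrt D / (m : ℝ) with hxdef
  have hm0 : (0:ℝ) < (m : ℝ) := by exact_mod_cast hm
  have hΔR : (0:ℝ) < (Δ : ℝ) := by exact_mod_cast hΔ
  have hΔtR : (0:ℝ) < |((Δt : ℝ))| := by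
    have : ((Δt : ℝ)) ≠ 0 := by
      have : Δt ≠ 0 := by omega
      exact_mod_cast this
    exact abs_pos.mpr this
  have hD : (0:ℝ) < D := mul_pos hΔR hΔtR
  have hx : (0:ℝ) < x := by
    have := Real.pi_pos
    have hs : (0:ℝ) < Real.sqrt D := Real.sqrt_pos.mpr hD
    positivity
  set C : ℝ := besselI (23 / 2) x with hCdef
  have hC : 0 < C := Aux.besselI_pos x hx
  have harg : ∀ γ : ℕ, Real.pi * Real.sqrt D / ((((γ : ℕ) + 2 : ℕ) : ℝ) * (m : ℝ))
      = x / ((γ : ℝ) + 2) := by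
    intro γ
    have hg : ((γ : ℝ) + 2) ≠ 0 := by positivity
    rw [hxdef]
    push_cast
    field_simp
  set A : ℚ := ((Δ : ℚ)) / (4 * m) with hAdef
  set B : ℚ := ((Δt : ℚ)) / (4 * m) with hBdef
  set f : ℕ → ℂ := fun γ => Kl m A B (γ + 2) ℓ ℓt * (((γ : ℕ) + 2 : ℕ) : ℂ)⁻¹ *
      ((besselI (23 / 2) (Real.pi * Real.sqrt D / ((((γ : ℕ) + 2 : ℕ) : ℝ) * (m : ℝ))) : ℝ) : ℂ)
    with hfdef
  have hbound : ∀ γ : ℕ, ‖f γ‖ ≤ 1 / ((γ : ℝ) + 2) ^ 10 * C := by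
    intro γ
    have hg2 : ((γ : ℝ) + 2) = (((γ + 2 : ℕ)) : ℝ) := by push_cast; ring
    have hgpos : (0:ℝ) < (γ : ℝ) + 2 := by positivity
    have hKl : ‖Kl m A B (γ + 2) ℓ ℓt‖ ≤ ((γ : ℝ) + 2) ^ 2 := by
      rw [hg2]
      exact Aux3.norm_Kl_le m hm A B (γ + 2) (by omega) ℓ ℓt
    have hinv : ‖(((γ : ℕ) + 2 : ℕ) : ℂ)⁻¹‖ = ((γ : ℝ) + 2)⁻¹ := by
      rw [norm_inv, Complex.norm_natCast]
      rw [hg2]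
    have hbb : besselI (23 / 2) (Real.pi * Real.sqrt D / ((((γ : ℕ) + 2 : ℕ) : ℝ) * (m : ℝ)))
        ≤ 1 / ((γ : ℝ) + 2) ^ 11 * C := by
      rw [harg γ]
      exact Aux.besselI_div_le x ((γ : ℝ) + 2) hx (by linarith [Nat.cast_nonneg (α := ℝ) γ])
    have hbnn : 0 ≤ besselI (23 / 2) (Real.pi * Real.sqrt D / ((((γ : ℕ) + 2 : ℕ) : ℝ) * (m : ℝ))) := by
      rw [harg γ]
      exact Aux.besselI_nonneg _ (by positivity)
    have hnorm : ‖f γ‖ = ‖Kl m A B (γ + 2) ℓ ℓt‖ * ((γ : ℝ) + 2)⁻¹ *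
        besselI (23 / 2) (Real.pi * Real.sqrt D / ((((γ : ℕ) + 2 : ℕ) : ℝ) * (m : ℝ))) := by
      rw [hfdef]
      simp only [norm_mul, hinv, Complex.norm_real]
      rw [Real.norm_of_nonneg hbnn]
    rw [hnorm]
    calc ‖Kl m A B (γ + 2) ℓ ℓt‖ * ((γ : ℝ) + 2)⁻¹ *
        besselI (23 / 2) (Real.pi * Real.sqrt D / ((((γ : ℕ) + 2 : ℕ) : ℝ) * (m : ℝ)))
        ≤ ((γ : ℝ) + 2) ^ 2 * ((γ : ℝ) + 2)⁻¹ * (1 / ((γ : ℝ) + 2) ^ 11 * C) := by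
          gcongr
      _ = 1 / ((γ : ℝ) + 2) ^ 10 * C := by
          field_simp
  have hsum_bound : Summable (fun γ : ℕ => 1 / ((γ : ℝ) + 2) ^ 10 * C) :=
    Aux3.summable_b.mul_right C
  have hsumnorm : Summable (fun γ : ℕ => ‖f γ‖) :=
    Summable.of_nonneg_of_le (fun γ => norm_nonneg _) hbound hsum_bound
  refine ⟨hsumnorm, ?_⟩
  have h1 : ‖∑' γ : ℕ, f γ‖ ≤ ∑' γ : ℕ, ‖f γ‖ := norm_tsum_le_tsum_norm hsumnorm
  have h2 : ∑' γ : ℕ, ‖f γ‖ ≤ ∑' γ : ℕ, 1 / ((γ : ℝ) + 2) ^ 10 * C :=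
    Summable.tsum_le_tsum hbound hsumnorm hsum_bound
  have h3 : ∑' γ : ℕ, 1 / ((γ : ℝ) + 2) ^ 10 * C ≤ 1 / 256 * C := by
    rw [tsum_mul_right]
    exact mul_le_mul_of_nonneg_right Aux3.tsum_b_le hC.le
  have h4 : (1:ℝ) / 256 * C < 2 / 21 * C := by nlinarith
  calc ‖∑' γ : ℕ, f γ‖ ≤ ∑' γ : ℕ, ‖f γ‖ := h1
    _ ≤ ∑' γ : ℕ, 1 / ((γ : ℝ) + 2) ^ 10 * C := h2
    _ ≤ 1 / 256 * C := h3
    _ < 2 / 21 * C := h4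
end

section
/- Let m ≥ 1 and let n, ℓ be integers with Δ = 4mn − ℓ² > 0. Then the series Σ_{γ=2}^∞ Kl(Δ/(4m), −1; γ, ψ)_{ℓ0}·γ^{−1/2}·I_12(2π√(Δ/m)/γ) converges absolutely and the modulus of its sum is strictly less than (2/21)·I_12(2π√(Δ/m)). -/
open Real

lemma besselI_eq_s5 (x : ℝ) : besselI 12 x
    = ∑' k : ℕ, (x/2)^(2*k+12) / ((k.factorial : ℝ) * ((k+12).factorial)) := by
  unfold besselI
  refine tsum_congr fun k => ?_
  have h1 : (2 * (k : ℝ) + 12) = ((2*k+12 : ℕ) : ℝ) := by push_cast; ring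
  have h2 : ((k : ℝ) + 12 + 1) = ((k + 12 : ℕ) : ℝ) + 1 := by push_cast; ring
  rw [h1, h2, Real.rpow_natCast, Real.Gamma_nat_eq_factorial]

lemma besselI_summable {x : ℝ} (hx : 0 ≤ x) :
    Summable (fun k : ℕ => (x/2)^(2*k+12) / ((k.factorial : ℝ) * ((k+12).factorial))) := by
  apply Summable.of_nonneg_of_le (fun k => by positivity) (fun k => ?_)
    ((Real.summable_pow_div_factorial ((x/2)^2)).mul_left ((x/2)^12))
  have h1 : (x/2)^(2*k+12) = (x/2)^12 * ((x/2)^2)^k := by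
    rw [← pow_mul]; rw [← pow_add]; ring_nf
  rw [h1, mul_div_assoc]
  refine mul_le_mul_of_nonneg_left ?_ (by positivity)
  apply div_le_div_of_nonneg_left (by positivity) (by positivity)
  calc ((k.factorial : ℝ)) = k.factorial * 1 := by ring
  _ ≤ (k.factorial : ℝ) * (k+12).factorial := by
      refine mul_le_mul_of_nonneg_left ?_ (by positivity)
      exact_mod_cast Nat.one_le_iff_ne_zero.mpr (Nat.factorial_ne_zero _)

lemma besselI_pos {x : ℝ} (hx : 0 < x) : 0 < besselI 12 x := by
  rw [besselI_eq_s5]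
  refine Summable.tsum_pos (besselI_summable hx.le) (fun k => by positivity) 0 ?_
  positivity

lemma besselI_nonneg {x : ℝ} (hx : 0 ≤ x) : 0 ≤ besselI 12 x := by
  rw [besselI_eq_s5]; exact tsum_nonneg fun k => by positivity

lemma besselI_div_le {x c : ℝ} (hx : 0 ≤ x) (hc : 1 ≤ c) :
    besselI 12 (x / c) ≤ besselI 12 x / c^12 := by
  have hc0 : 0 < c := lt_of_lt_of_le one_pos hc
  rw [besselI_eq_s5, besselI_eq_s5, ← tsum_div_const]
  refine Summable.tsum_le_tsum (fun k => ?_) (besselI_summable (by positivity))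
    ((besselI_summable hx).div_const _)
  have h1 : (x / c / 2)^(2*k+12) = (x/2)^(2*k+12) / c^(2*k+12) := by
    rw [div_div, mul_comm c 2, ← div_div, div_pow]
  rw [h1, div_right_comm ((x/2)^(2*k+12))]
  refine div_le_div_of_nonneg_left (by positivity) (by positivity)
    (pow_le_pow_right₀ hc (by omega))


lemma norm_exp_two_pi_I (r : ℝ) : ‖Complex.exp (2*(Real.pi:ℂ)*Complex.I*(r:ℂ))‖ = 1 := by
  rw [Complex.norm_exp]
  have : (2*(Real.pi:ℂ)*Complex.I*(r:ℂ)).re = 0 := by simp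
  rw [this, Real.exp_zero]

lemma psi_norm (m γ : ℕ) (hm : 1 ≤ m) (hγ : 1 ≤ γ) (δ ℓt ℓ : ℤ) :
    ‖psiMult m γ δ ℓt ℓ‖ ≤ (γ:ℝ) * ((2*m*γ : ℝ)) ^ (-(1/2) : ℝ) := by
  unfold psiMult
  rw [norm_mul]
  have hz : (((2 * m * γ : ℕ) : ℂ) * Complex.I) ≠ 0 := by
    simp only [ne_eq, mul_eq_zero, Complex.I_ne_zero, or_false, Nat.cast_eq_zero]
    omega
  have h1 : ‖(((2 * m * γ : ℕ) : ℂ) * Complex.I) ^ (-(1 / 2 : ℂ))‖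
      = ((2*m*γ : ℝ)) ^ (-(1/2) : ℝ) := by
    rw [Complex.norm_cpow_of_ne_zero hz]
    simp [Complex.norm_natCast]
  rw [h1, mul_comm (((2*m*γ:ℝ)) ^ (-(1/2) : ℝ))]
  refine mul_le_mul_of_nonneg_right ?_ (by positivity)
  refine (norm_sum_le _ _).trans ?_
  refine le_trans (Finset.sum_le_sum (fun T (_ : T ∈ Finset.range γ) => ?_))
    (le_of_eq (by simp) : (∑ T ∈ Finset.range γ, (1:ℝ)) ≤ γ)
  set α : ℕ := (((δ : ZMod γ)⁻¹).val : ℕ)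
  have : ((((α : ℕ) : ℂ) * ((ℓt : ℂ) - 2 * m * T) ^ 2) / (4 * m * γ)
      - ((ℓ : ℂ) * ((ℓt : ℂ) - 2 * m * T)) / (2 * m * γ)
      + ((δ : ℂ) * (ℓ : ℂ) ^ 2) / (4 * m * γ))
      = (((α * ((ℓt : ℝ) - 2*m*T)^2) / (4*m*γ)
        - (ℓ * ((ℓt : ℝ) - 2*m*T)) / (2*m*γ)
        + (δ * (ℓ:ℝ)^2) / (4*m*γ) : ℝ) : ℂ) := by
    push_cast
    ring
  rw [this, norm_exp_two_pi_I]

lemma Kl_norm (m : ℕ) (hm : 1 ≤ m) (A B : ℚ) (γ : ℕ) (hγ : 1 ≤ γ) (ℓ ℓt : ℤ) :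
    ‖Kl m A B γ ℓ ℓt‖ ≤ (γ:ℝ) * ((γ:ℝ) * ((2*m*γ : ℝ)) ^ (-(1/2) : ℝ)) := by
  unfold Kl
  refine (norm_sum_le _ _).trans ?_
  have hterm : ∀ j ∈ (Finset.range γ).filter fun j => Nat.gcd j γ = 1,
      ‖Complex.exp (2 * (Real.pi : ℂ) * Complex.I *
        (((((-(j : ℤ) : ZMod γ)⁻¹).val : ℕ) : ℂ) * (B : ℂ) / γ + ((-(j : ℤ) : ℤ) : ℂ) * (A : ℂ) / γ)) *
        psiMult m γ (-(j : ℤ)) ℓt ℓ‖ ≤ (γ:ℝ) * ((2*m*γ : ℝ)) ^ (-(1/2) : ℝ) := by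
    intro j _
    rw [norm_mul]
    set α : ℕ := ((-(j : ℤ) : ZMod γ)⁻¹).val
    have he : ((((α:ℕ)) : ℂ) * (B : ℂ) / γ + ((-(j : ℤ) : ℤ) : ℂ) * (A : ℂ) / γ)
        = (((α * (B:ℝ)/γ + (-(j:ℝ)) * (A:ℝ)/γ : ℝ)) : ℂ) := by
      push_cast
      ring
    rw [he, norm_exp_two_pi_I, one_mul]
    exact psi_norm m γ hm hγ _ _ _
  refine (Finset.sum_le_sum hterm).trans ?_
  rw [Finset.sum_const, nsmul_eq_mul]
  refine mul_le_mul_of_nonneg_right ?_ (by positivity)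
  exact_mod_cast (Finset.card_filter_le _ _).trans (by simp)


lemma hasSum_telescope : HasSum (fun n : ℕ => (1:ℝ)/(((n:ℝ)+1)*((n:ℝ)+2))) 1 := by
  have hf : ∀ n : ℕ, (1:ℝ)/(((n:ℝ)+1)*((n:ℝ)+2)) = 1/((n:ℝ)+1) - 1/((n:ℝ)+2) := by
    intro n
    have h1 : ((n:ℝ)+1) ≠ 0 := by positivity
    have h2 : ((n:ℝ)+2) ≠ 0 := by positivity
    field_simp
    ring
  rw [(hasSum_iff_tendsto_nat_of_nonneg (fun n => by positivity) 1)]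
  have hsum : ∀ N : ℕ, ∑ n ∈ Finset.range N, (1:ℝ)/(((n:ℝ)+1)*((n:ℝ)+2))
      = 1 - 1/((N:ℝ)+1) := by
    intro N
    calc ∑ n ∈ Finset.range N, (1:ℝ)/(((n:ℝ)+1)*((n:ℝ)+2))
        = ∑ n ∈ Finset.range N,
            ((fun k : ℕ => 1/((k:ℝ)+1)) n - (fun k : ℕ => 1/((k:ℝ)+1)) (n+1)) := by
          refine Finset.sum_congr rfl fun n _ => ?_
          rw [hf n]; push_cast; ring
      _ = (fun k : ℕ => 1/((k:ℝ)+1)) 0 - (fun k : ℕ => 1/((k:ℝ)+1)) N :=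
          Finset.sum_range_sub' _ N
      _ = 1 - 1/((N:ℝ)+1) := by norm_num
  simp only [hsum]
  have : Filter.Tendsto (fun N : ℕ => 1 - 1/((N:ℝ)+1)) Filter.atTop (nhds (1 - 0)) :=
    Filter.Tendsto.const_sub _ tendsto_one_div_add_atTop_nhds_zero_nat
  simpa using this

theorem stmt5 (m : ℕ) (hm : 1 ≤ m) (n ℓ : ℤ)
    (hΔ : 0 < 4 * (m : ℤ) * n - ℓ ^ 2) :
    Summable (fun γ : ℕ =>
      ‖Kl m (((4 * (m : ℤ) * n - ℓ ^ 2 : ℤ) : ℚ) / (4 * m)) (-1) (γ + 2) ℓ 0 *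
        (((((γ : ℕ) + 2 : ℕ) : ℝ) ^ (-(1 / 2 : ℝ)) : ℝ) : ℂ) *
        (besselI 12
          (2 * Real.pi * Real.sqrt (((4 * (m : ℤ) * n - ℓ ^ 2 : ℤ) : ℝ) / m) /
            (((γ : ℕ) + 2 : ℕ) : ℝ)) : ℝ)‖) ∧
    ‖∑' γ : ℕ,
        Kl m (((4 * (m : ℤ) * n - ℓ ^ 2 : ℤ) : ℚ) / (4 * m)) (-1) (γ + 2) ℓ 0 *
        (((((γ : ℕ) + 2 : ℕ) : ℝ) ^ (-(1 / 2 : ℝ)) : ℝ) : ℂ) *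
        (besselI 12
          (2 * Real.pi * Real.sqrt (((4 * (m : ℤ) * n - ℓ ^ 2 : ℤ) : ℝ) / m) /
            (((γ : ℕ) + 2 : ℕ) : ℝ)) : ℝ)‖ <
      (2 / 21) * besselI 12 (2 * Real.pi * Real.sqrt (((4 * (m : ℤ) * n - ℓ ^ 2 : ℤ) : ℝ) / m)) := by
  set x : ℝ := 2 * Real.pi * Real.sqrt (((4 * (m : ℤ) * n - ℓ ^ 2 : ℤ) : ℝ) / m) with hxdef
  have hΔR : (0:ℝ) < ((4 * (m : ℤ) * n - ℓ ^ 2 : ℤ) : ℝ) := by exact_mod_cast hΔ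
  have hmR : (0:ℝ) < (m:ℝ) := by exact_mod_cast hm
  have hx : 0 < x := by
    have : 0 < ((4 * (m : ℤ) * n - ℓ ^ 2 : ℤ) : ℝ) / m := by positivity
    have := Real.sqrt_pos.mpr this
    positivity
  set I : ℝ := besselI 12 x with hIdef
  have hI : 0 < I := besselI_pos hx
  set f : ℕ → ℂ := fun γ : ℕ =>
      Kl m (((4 * (m : ℤ) * n - ℓ ^ 2 : ℤ) : ℚ) / (4 * m)) (-1) (γ + 2) ℓ 0 *
        (((((γ : ℕ) + 2 : ℕ) : ℝ) ^ (-(1 / 2 : ℝ)) : ℝ) : ℂ) *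
        ((besselI 12 (x / (((γ : ℕ) + 2 : ℕ) : ℝ)) : ℝ) : ℂ) with hfdef
  have key : ∀ γ : ℕ, ‖f γ‖ ≤ (I / 2^9) * ((1:ℝ)/(((γ:ℝ)+1)*((γ:ℝ)+2))) := by
    intro γ
    set c : ℝ := (γ:ℝ) + 2 with hcdef
    have hc0 : (0:ℝ) < c := by positivity
    have hc2 : (2:ℝ) ≤ c := by simp [hcdef]
    have hcast : (((γ:ℕ) + 2 : ℕ) : ℝ) = c := by push_cast [hcdef]; ring
    have hnorm : ‖f γ‖ = ‖Kl m (((4 * (m : ℤ) * n - ℓ ^ 2 : ℤ) : ℚ) / (4 * m)) (-1) (γ + 2) ℓ 0‖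
        * (c ^ (-(1/2) : ℝ)) * besselI 12 (x / c) := by
      rw [hfdef]
      simp only [norm_mul, Complex.norm_real, Real.norm_eq_abs, hcast]
      rw [abs_of_nonneg (by positivity), abs_of_nonneg (besselI_nonneg (by positivity))]
    rw [hnorm]
    have hKl : ‖Kl m (((4 * (m : ℤ) * n - ℓ ^ 2 : ℤ) : ℚ) / (4 * m)) (-1) (γ + 2) ℓ 0‖
        ≤ c * (c * ((2*(m:ℝ)*c)) ^ (-(1/2) : ℝ)) := by
      have := Kl_norm m hm (((4 * (m : ℤ) * n - ℓ ^ 2 : ℤ) : ℚ) / (4 * m)) (-1) (γ+2)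
        (by omega) ℓ 0
      calc ‖Kl m _ (-1) (γ + 2) ℓ 0‖ ≤ ((γ+2:ℕ):ℝ) * (((γ+2:ℕ):ℝ) * ((2*m*(γ+2:ℕ) : ℝ)) ^ (-(1/2) : ℝ)) := this
      _ = c * (c * ((2*(m:ℝ)*c)) ^ (-(1/2) : ℝ)) := by push_cast [hcdef]; ring_nf
    have hB : besselI 12 (x / c) ≤ I / c^12 := besselI_div_le hx.le (by linarith)
    have hB0 : 0 ≤ besselI 12 (x / c) := besselI_nonneg (by positivity)
    have hrpow : ((2*(m:ℝ)*c)) ^ (-(1/2) : ℝ) ≤ c ^ (-(1/2) : ℝ) :=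
      Real.rpow_le_rpow_of_nonpos hc0
        (by nlinarith [mul_nonneg (sub_nonneg.mpr (show (1:ℝ) ≤ (m:ℝ) from by exact_mod_cast hm)) hc0.le]) (by norm_num)
    have hKl2 : ‖Kl m (((4 * (m : ℤ) * n - ℓ ^ 2 : ℤ) : ℚ) / (4 * m)) (-1) (γ + 2) ℓ 0‖
        ≤ c * (c * c ^ (-(1/2) : ℝ)) :=
      hKl.trans (mul_le_mul_of_nonneg_left (mul_le_mul_of_nonneg_left hrpow hc0.le) hc0.le)
    have hhalf : c ^ (-(1/2) : ℝ) * c ^ (-(1/2) : ℝ) = 1/c := by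
      rw [← Real.rpow_add hc0]
      norm_num [Real.rpow_neg_one]
    have hprod : c * (c * c ^ (-(1/2) : ℝ)) * c ^ (-(1/2) : ℝ) = c := by
      calc c * (c * c ^ (-(1/2) : ℝ)) * c ^ (-(1/2) : ℝ)
          = c * c * (c ^ (-(1/2) : ℝ) * c ^ (-(1/2) : ℝ)) := by ring
        _ = c * c * (1/c) := by rw [hhalf]
        _ = c := by field_simp
    have hc11 : (2:ℝ)^9 * (((γ:ℝ)+1)*((γ:ℝ)+2)) ≤ c^11 := by
      have h9 : (2:ℝ)^9 ≤ c^9 := pow_le_pow_left₀ (by norm_num) hc2 9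
      have h2' : ((γ:ℝ)+1)*((γ:ℝ)+2) ≤ c^2 := by nlinarith [hc0]
      calc (2:ℝ)^9 * (((γ:ℝ)+1)*((γ:ℝ)+2)) ≤ c^9 * c^2 :=
            mul_le_mul h9 h2' (by positivity) (by positivity)
        _ = c^11 := by ring
    calc ‖Kl m (((4 * (m : ℤ) * n - ℓ ^ 2 : ℤ) : ℚ) / (4 * m)) (-1) (γ + 2) ℓ 0‖
          * (c ^ (-(1/2) : ℝ)) * besselI 12 (x / c)
        ≤ (c * (c * c ^ (-(1/2) : ℝ))) * (c ^ (-(1/2) : ℝ)) * (I / c^12) := by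
          refine mul_le_mul (mul_le_mul_of_nonneg_right hKl2 (by positivity)) hB hB0 ?_
          positivity
      _ = c * (I / c^12) := by rw [hprod]
      _ = I / c^11 := by field_simp
      _ ≤ I / ((2:ℝ)^9 * (((γ:ℝ)+1)*((γ:ℝ)+2))) := by
          refine div_le_div_of_nonneg_left hI.le (by positivity) hc11
      _ = (I / 2^9) * ((1:ℝ)/(((γ:ℝ)+1)*((γ:ℝ)+2))) := by
          field_simp
  have hBsum : Summable (fun γ : ℕ => (I / 2^9) * ((1:ℝ)/(((γ:ℝ)+1)*((γ:ℝ)+2)))) :=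
    (hasSum_telescope.mul_left (I / 2^9)).summable
  have hsummable : Summable (fun γ : ℕ => ‖f γ‖) :=
    Summable.of_nonneg_of_le (fun γ => norm_nonneg _) key hBsum
  refine ⟨hsummable, ?_⟩
  have htsum : ∑' γ : ℕ, (I / 2^9) * ((1:ℝ)/(((γ:ℝ)+1)*((γ:ℝ)+2))) = I / 2^9 := by
    rw [(hasSum_telescope.mul_left (I / 2^9)).tsum_eq]; ring
  calc ‖∑' γ : ℕ, f γ‖ ≤ ∑' γ : ℕ, ‖f γ‖ := norm_tsum_le_tsum_norm hsummable
    _ ≤ ∑' γ : ℕ, (I / 2^9) * ((1:ℝ)/(((γ:ℝ)+1)*((γ:ℝ)+2))) :=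
        Summable.tsum_le_tsum key hsummable hBsum
    _ = I / 2^9 := htsum
    _ < (2 / 21) * I := by nlinarith
end

section
/- Let m and k be integers with m ≥ 6 and 1 ≤ k < m. Then c_m^F(0, m−k) ≤ (1 + 25/d(k) + (91/(88π))·k^{1/2})·ĉ_m^F(0, m−k), where c_m^F(0, ℓ̃) = ℓ̃·d(0)·Σ_{r=1}^{⌊(m+1)/ℓ̃⌋} d(m − rℓ̃) for 0 < ℓ̃ ≤ m, and ĉ_m^F(0, ℓ̃) = ℓ̃·d(m − ℓ̃)·d(0). -/
/-- `d n`: the coefficient of `q^(n+1)` in `∏ (1 - q^j)^{-24}`, i.e. the number of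
24-tuples of integer partitions whose sizes sum to `n+1` (and `0` for `n < -1`). -/
def dcoef (n : ℤ) : ℤ :=
  if 0 ≤ n + 1 then
    ∑ v ∈ Finset.Nat.antidiagonalTuple 24 (n + 1).toNat,
      ∏ i, (Fintype.card (Nat.Partition (v i)) : ℤ)
  else 0

/-- `c_m^F(0, ℓ̃) = ℓ̃ · d(0) · Σ_{r=1}^{⌊(m+1)/ℓ̃⌋} d(m − rℓ̃)` for `0 < ℓ̃ ≤ m`. -/
noncomputable def cF0 (m ℓt : ℤ) : ℤ :=
  ℓt * dcoef 0 * ∑ r ∈ Finset.Icc 1 ((m + 1) / ℓt), dcoef (m - r * ℓt)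

open Finset


def pcard (n : ℕ) : ℕ := Fintype.card (Nat.Partition n)

def ecoef (n : ℕ) : ℕ :=
  ∑ v ∈ Finset.Nat.antidiagonalTuple 24 n, ∏ i, pcard (v i)

def qcard (n m : ℕ) : ℕ :=
  (Finset.univ.filter (fun lam : Nat.Partition n => m ∈ lam.parts)).card

lemma pcard_zero : pcard 0 = 1 := Fintype.card_unique
lemma pcard_one : pcard 1 = 1 := Fintype.card_unique
lemma pcard_pos (n : ℕ) : 1 ≤ pcard n := Fintype.card_pos

lemma qcard_le (n m : ℕ) : qcard n m ≤ pcard n := Finset.card_filter_le _ _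

lemma qcard_eq_zero {n m : ℕ} (h : n < m) : qcard n m = 0 := by
  classical
  rw [qcard, Finset.card_eq_zero, Finset.filter_eq_empty_iff]
  intro lam _ hmem
  have h2 := Multiset.le_sum_of_mem hmem
  rw [lam.parts_sum] at h2
  omega

lemma qcard_eq {n m : ℕ} (hm : 1 ≤ m) (hmn : m ≤ n) : qcard n m = pcard (n - m) := by
  classical
  rw [qcard, pcard, ← Finset.card_univ]
  apply Finset.card_bij (fun lam hlam => (⟨lam.parts.erase m,
      fun hi => lam.parts_pos (Multiset.mem_of_mem_erase hi), by
      have hs := lam.parts_sum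
      have hmem : m ∈ lam.parts := by simpa using (Finset.mem_filter.mp hlam).2
      rw [← Multiset.cons_erase hmem, Multiset.sum_cons] at hs
      omega⟩ : Nat.Partition (n - m)))
  · intro a ha; exact Finset.mem_univ _
  · intro a ha b hb hab
    have hma : m ∈ a.parts := by simpa using (Finset.mem_filter.mp ha).2
    have hmb : m ∈ b.parts := by simpa using (Finset.mem_filter.mp hb).2
    have h3 : a.parts.erase m = b.parts.erase m := congrArg Nat.Partition.parts hab
    apply Nat.Partition.ext
    rw [← Multiset.cons_erase hma, ← Multiset.cons_erase hmb, h3]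
  · intro mu _
    refine ⟨⟨m ::ₘ mu.parts, fun hi => ?_, by rw [Multiset.sum_cons, mu.parts_sum]; omega⟩, ?_, ?_⟩
    · rcases Multiset.mem_cons.mp hi with h | h
      · omega
      · exact mu.parts_pos h
    · simp
    · apply Nat.Partition.ext
      simp [Multiset.erase_cons_head]


lemma toFinset_sum_le (s : Multiset ℕ) : ∑ m ∈ s.toFinset, m ≤ s.sum := by
  obtain ⟨u, hu⟩ := Multiset.le_iff_exists_add.mp (Multiset.dedup_le s)
  have h1 : ∑ m ∈ s.toFinset, m = s.dedup.sum := by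
    rw [Finset.sum]; simp [Multiset.toFinset]
  rw [h1]
  conv_rhs => rw [hu]
  rw [Multiset.sum_add]
  omega


lemma sum_m_qcard_le (n N : ℕ) : ∑ m ∈ Icc 1 N, m * qcard n m ≤ n * pcard n := by
  classical
  have h1 : ∀ m, m * qcard n m = ∑ lam : Nat.Partition n, (if m ∈ lam.parts then m else 0) := by
    intro m
    rw [qcard, Finset.card_filter, Finset.mul_sum]
    simp [mul_ite]
  calc ∑ m ∈ Icc 1 N, m * qcard n m
      = ∑ m ∈ Icc 1 N, ∑ lam : Nat.Partition n, (if m ∈ lam.parts then m else 0) := by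
        simp_rw [h1]
    _ = ∑ lam : Nat.Partition n, ∑ m ∈ Icc 1 N, (if m ∈ lam.parts then m else 0) :=
        Finset.sum_comm
    _ ≤ ∑ lam : Nat.Partition n, n := by
        apply Finset.sum_le_sum
        intro lam _
        rw [← Finset.sum_filter]
        calc ∑ m ∈ (Icc 1 N).filter (· ∈ lam.parts), m
            ≤ ∑ m ∈ lam.parts.toFinset, m := by
              apply Finset.sum_le_sum_of_subset
              intro x hx
              simp only [Finset.mem_filter] at hx
              simpa using hx.2
          _ ≤ lam.parts.sum := toFinset_sum_le _
          _ = n := lam.parts_sum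
    _ = n * pcard n := by rw [Finset.sum_const, Finset.card_univ, pcard, smul_eq_mul, mul_comm]


lemma shift (N m : ℕ) (i : Fin 24) (hm : 1 ≤ m) (hmN : m ≤ N) :
    ∑ v ∈ Finset.Nat.antidiagonalTuple 24 N,
      qcard (v i) m * ∏ j ∈ univ.erase i, pcard (v j) = ecoef (N - m) := by
  classical
  rw [ecoef]
  rw [← Finset.sum_filter_of_ne (p := fun v : Fin 24 → ℕ => m ≤ v i)
    (fun v _ hne => by
      by_contra hlt
      exact hne (by rw [qcard_eq_zero (by omega)]; ring))]
  apply Finset.sum_nbij' (fun v => Function.update v i (v i - m))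
    (fun v => Function.update v i (v i + m))
  · intro v hv
    simp only [Finset.mem_filter, Finset.Nat.mem_antidiagonalTuple] at hv ⊢
    obtain ⟨hsum, hle⟩ := hv
    rw [Finset.sum_update_of_mem (Finset.mem_univ i), ← Finset.erase_eq]
    have h2 : v i + ∑ j ∈ univ.erase i, v j = ∑ j, v j := Finset.add_sum_erase _ _ (Finset.mem_univ i)
    omega
  · intro v hv
    simp only [Finset.mem_filter, Finset.Nat.mem_antidiagonalTuple] at hv ⊢
    rw [Finset.sum_update_of_mem (Finset.mem_univ i), ← Finset.erase_eq]
    have h2 : v i + ∑ j ∈ univ.erase i, v j = ∑ j, v j := Finset.add_sum_erase _ _ (Finset.mem_univ i)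
    simp only [Function.update_self]
    omega
  · intro v hv
    simp only [Finset.mem_filter] at hv
    funext j
    rcases eq_or_ne j i with rfl | hne
    · simp [Function.update_self, Nat.sub_add_cancel hv.2]
    · simp [Function.update_of_ne hne]
  · intro v hv
    funext j
    rcases eq_or_ne j i with rfl | hne
    · simp [Function.update_self]
    · simp [Function.update_of_ne hne]
  · intro v hv
    simp only [Finset.mem_filter] at hv
    rw [← Finset.mul_prod_erase _ _ (Finset.mem_univ i), Function.update_self,
      qcard_eq hm hv.2]
    congr 1
    apply Finset.prod_congr rfl
    intro j hj
    rw [Function.update_of_ne (Finset.ne_of_mem_erase hj)]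


lemma lemmaA (N : ℕ) : ∑ m ∈ Icc 1 N, 24 * m * ecoef (N - m) ≤ N * ecoef N := by
  classical
  have key : (∑ v ∈ Finset.Nat.antidiagonalTuple 24 N, ∑ i : Fin 24, ∑ m ∈ Icc 1 N,
          m * (qcard (v i) m * ∏ j ∈ univ.erase i, pcard (v j)))
      = ∑ m ∈ Icc 1 N, 24 * m * ecoef (N - m) := by
    calc (∑ v ∈ Finset.Nat.antidiagonalTuple 24 N, ∑ i : Fin 24, ∑ m ∈ Icc 1 N,
          m * (qcard (v i) m * ∏ j ∈ univ.erase i, pcard (v j)))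
        = ∑ i : Fin 24, ∑ v ∈ Finset.Nat.antidiagonalTuple 24 N, ∑ m ∈ Icc 1 N,
          m * (qcard (v i) m * ∏ j ∈ univ.erase i, pcard (v j)) := Finset.sum_comm
      _ = ∑ i : Fin 24, ∑ m ∈ Icc 1 N, ∑ v ∈ Finset.Nat.antidiagonalTuple 24 N,
          m * (qcard (v i) m * ∏ j ∈ univ.erase i, pcard (v j)) :=
          Finset.sum_congr rfl (fun i _ => Finset.sum_comm)
      _ = ∑ i : Fin 24, ∑ m ∈ Icc 1 N, m * ecoef (N - m) := by
          apply Finset.sum_congr rfl; intro i _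
          apply Finset.sum_congr rfl; intro m hm
          simp only [Finset.mem_Icc] at hm
          rw [← Finset.mul_sum, shift N m i hm.1 hm.2]
      _ = ∑ m ∈ Icc 1 N, ∑ i : Fin 24, m * ecoef (N - m) := Finset.sum_comm
      _ = ∑ m ∈ Icc 1 N, 24 * m * ecoef (N - m) := by
          apply Finset.sum_congr rfl; intro m _
          rw [Finset.sum_const, Finset.card_univ, Fintype.card_fin, smul_eq_mul, ← mul_assoc]
  rw [← key]
  calc (∑ v ∈ Finset.Nat.antidiagonalTuple 24 N, ∑ i : Fin 24, ∑ m ∈ Icc 1 N,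
          m * (qcard (v i) m * ∏ j ∈ univ.erase i, pcard (v j)))
      ≤ ∑ v ∈ Finset.Nat.antidiagonalTuple 24 N, ∑ i : Fin 24,
          (v i) * ∏ j, pcard (v j) := by
        apply Finset.sum_le_sum; intro v _
        apply Finset.sum_le_sum; intro i _
        have h1 : (∑ m ∈ Icc 1 N, m * (qcard (v i) m * ∏ j ∈ univ.erase i, pcard (v j)))
            = (∑ m ∈ Icc 1 N, m * qcard (v i) m) * ∏ j ∈ univ.erase i, pcard (v j) := by
          rw [Finset.sum_mul]; apply Finset.sum_congr rfl; intros; ring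
        rw [h1, ← Finset.mul_prod_erase _ _ (Finset.mem_univ i), ← mul_assoc]
        exact Nat.mul_le_mul_right _ (sum_m_qcard_le _ _)
    _ = N * ecoef N := by
        rw [ecoef, Finset.mul_sum]
        apply Finset.sum_congr rfl
        intro v hv
        rw [← Finset.sum_mul]
        rw [Finset.Nat.mem_antidiagonalTuple] at hv
        rw [hv]

lemma ecoef_mono (n : ℕ) : ecoef n ≤ ecoef (n + 1) := by
  classical
  have h := shift (n+1) 1 0 (le_refl 1) (by omega)
  simp only [Nat.add_sub_cancel] at h
  rw [← h, ecoef]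
  apply Finset.sum_le_sum
  intro v _
  rw [← Finset.mul_prod_erase _ _ (Finset.mem_univ (0 : Fin 24))]
  exact Nat.mul_le_mul_right _ (qcard_le _ _)

lemma ecoef_le {a b : ℕ} (h : a ≤ b) : ecoef a ≤ ecoef b := by
  induction b with
  | zero => have h0 : a = 0 := by omega
            rw [h0]
  | succ b ih =>
    rcases Nat.lt_or_ge a (b+1) with h2 | h2
    · exact le_trans (ih (by omega)) (ecoef_mono b)
    · have h0 : a = b + 1 := by omega
      rw [h0]


lemma ecoef_zero : ecoef 0 = 1 := by
  rw [ecoef, Finset.Nat.antidiagonalTuple_zero_right]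
  simp [pcard_zero]

lemma ecoef_pos (n : ℕ) : 1 ≤ ecoef n := by
  classical
  have hmem : (fun j : Fin 24 => if j = 0 then n else 0) ∈ Finset.Nat.antidiagonalTuple 24 n := by
    rw [Finset.Nat.mem_antidiagonalTuple]
    simp
  calc (1 : ℕ) ≤ ∏ j, pcard (if j = 0 then n else 0) :=
        Finset.one_le_prod' (fun j _ => pcard_pos _)
    _ ≤ ecoef n := Finset.single_le_sum (f := fun v : Fin 24 → ℕ => ∏ j, pcard (v j))
        (fun v _ => Nat.zero_le _) hmem

lemma ecoef_one : ecoef 1 = 24 := by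
  classical
  have key : ∀ v ∈ Finset.Nat.antidiagonalTuple 24 1,
      (∏ j, pcard (v j)) = ∑ i : Fin 24, qcard (v i) 1 * ∏ j ∈ univ.erase i, pcard (v j) := by
    intro v hv
    rw [Finset.Nat.mem_antidiagonalTuple] at hv
    have hle : ∀ j, v j ≤ 1 := by
      intro j
      calc v j ≤ ∑ i, v i := Finset.single_le_sum (fun i _ => Nat.zero_le _) (Finset.mem_univ j)
        _ = 1 := hv
    have hp : ∀ j, pcard (v j) = 1 := by
      intro j
      have := hle j
      interval_cases h : v j
      · exact pcard_zero
      · exact pcard_one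
    have hq : ∀ i, qcard (v i) 1 = v i := by
      intro i
      have := hle i
      interval_cases h : v i
      · exact qcard_eq_zero (by omega)
      · rw [qcard_eq le_rfl le_rfl]; exact pcard_zero
    calc (∏ j, pcard (v j)) = 1 := Finset.prod_eq_one (fun j _ => hp j)
      _ = ∑ i, v i := hv.symm
      _ = ∑ i : Fin 24, qcard (v i) 1 * ∏ j ∈ univ.erase i, pcard (v j) := by
          apply Finset.sum_congr rfl
          intro i _
          rw [hq i, Finset.prod_eq_one (fun j _ => hp j), mul_one]
  calc ecoef 1 = ∑ v ∈ Finset.Nat.antidiagonalTuple 24 1,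
        ∑ i : Fin 24, qcard (v i) 1 * ∏ j ∈ univ.erase i, pcard (v j) :=
        Finset.sum_congr rfl key
    _ = ∑ i : Fin 24, ∑ v ∈ Finset.Nat.antidiagonalTuple 24 1,
        qcard (v i) 1 * ∏ j ∈ univ.erase i, pcard (v j) := Finset.sum_comm
    _ = ∑ _i : Fin 24, ecoef 0 := Finset.sum_congr rfl (fun i _ => shift 1 1 i le_rfl le_rfl)
    _ = 24 := by rw [ecoef_zero]; simp


lemma coreW (K W : ℕ) (hK : 1 ≤ K) (hW : 1 ≤ W) :
    (∑ m ∈ Icc 1 (K-1), (ecoef (K+1-m) : ℝ)) ≤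
      (((K:ℝ)+1)/(24*W) + ((W:ℝ)-1)/2) * ecoef (K+1) := by
  classical
  set E : ℝ := (ecoef (K+1) : ℝ) with hE
  have hWpos : (0:ℝ) < W := by positivity
  have hEpos : (0:ℝ) ≤ E := by positivity
  -- step 1 : weighted sum bound from lemmaA
  have step1 : (∑ m ∈ Icc 1 (K-1), (m:ℝ) * (ecoef (K+1-m):ℝ)) ≤ ((K:ℝ)+1) * E / 24 := by
    have hnat : ∑ m ∈ Icc 1 (K-1), 24 * m * ecoef (K+1-m) ≤ (K+1) * ecoef (K+1) := by
      calc ∑ m ∈ Icc 1 (K-1), 24 * m * ecoef (K+1-m)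
          ≤ ∑ m ∈ Icc 1 (K+1), 24 * m * ecoef (K+1-m) :=
            Finset.sum_le_sum_of_subset (Finset.Icc_subset_Icc_right (by omega))
        _ ≤ (K+1) * ecoef (K+1) := lemmaA (K+1)
    have : ((∑ m ∈ Icc 1 (K-1), 24 * m * ecoef (K+1-m) : ℕ) : ℝ)
        ≤ (((K+1) * ecoef (K+1) : ℕ) : ℝ) := Nat.cast_le.mpr hnat
    push_cast at this
    have h5 : (24:ℝ) * ∑ m ∈ Icc 1 (K-1), (m:ℝ) * (ecoef (K+1-m):ℝ)
        = ∑ x ∈ Icc 1 (K-1), 24 * (x:ℝ) * (ecoef (K+1-x):ℝ) := by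
      rw [Finset.mul_sum]; exact Finset.sum_congr rfl fun _ _ => by ring
    linarith [this, h5]
  -- step 2 : termwise bound
  have step2 : ∀ m ∈ Icc 1 (K-1), (ecoef (K+1-m):ℝ) ≤
      (m:ℝ)/W * (ecoef (K+1-m):ℝ) + (if m < W then (1 - (m:ℝ)/W) * E else 0) := by
    intro m hm
    simp only [Finset.mem_Icc] at hm
    rcases Nat.lt_or_ge m W with hmW | hmW
    · rw [if_pos hmW]
      have h1 : (ecoef (K+1-m):ℝ) ≤ E := by
        rw [hE]; exact_mod_cast Nat.cast_le.mpr (ecoef_le (by omega))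
      have h2 : (0:ℝ) ≤ 1 - (m:ℝ)/W := by
        rw [sub_nonneg, div_le_one hWpos]
        exact_mod_cast Nat.le_of_lt_succ (by omega)
      nlinarith [h1, h2, mul_le_mul_of_nonneg_left h1 h2]
    · rw [if_neg (by omega)]
      have h1 : (1:ℝ) ≤ (m:ℝ)/W := by
        rw [le_div_iff₀ hWpos, one_mul]; exact_mod_cast hmW
      have h2 : (0:ℝ) ≤ (ecoef (K+1-m):ℝ) := by positivity
      nlinarith [h1, h2]
  -- step 3 : the triangular sum
  have step3 : (∑ m ∈ Icc 1 (K-1), (if m < W then (1 - (m:ℝ)/W) * E else 0)) ≤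
      ((W:ℝ)-1)/2 * E := by
    have hsub : ∑ m ∈ Icc 1 (K-1), (if m < W then (1 - (m:ℝ)/W) * E else 0)
        = ∑ m ∈ (Icc 1 (K-1)).filter (· < W), (1 - (m:ℝ)/W) * E := by
      rw [Finset.sum_filter]
    rw [hsub]
    have hss : (Icc 1 (K-1)).filter (· < W) ⊆ Icc 1 (W-1) := by
      intro x hx
      simp only [Finset.mem_filter, Finset.mem_Icc] at hx ⊢
      omega
    have hmono : ∑ m ∈ (Icc 1 (K-1)).filter (· < W), (1 - (m:ℝ)/W) * E
        ≤ ∑ m ∈ Icc 1 (W-1), (1 - (m:ℝ)/W) * E := by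
      apply Finset.sum_le_sum_of_subset_of_nonneg hss
      intro m hm _
      simp only [Finset.mem_Icc] at hm
      have : (m:ℝ) ≤ (W:ℝ) - 1 := by
        have : (m:ℝ) ≤ ((W-1:ℕ):ℝ) := Nat.cast_le.mpr hm.2
        push_cast [Nat.cast_sub hW] at this ⊢
        linarith
      have h2 : (0:ℝ) ≤ 1 - (m:ℝ)/W := by
        rw [sub_nonneg, div_le_one hWpos]; linarith
      positivity
    refine hmono.trans ?_
    -- gauss
    have hgauss : (∑ m ∈ Icc 1 (W-1), (m:ℝ)) = (W:ℝ)*((W:ℝ)-1)/2 := by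
      have h1 : range W = insert 0 (Icc 1 (W-1)) := by
        ext x; simp only [Finset.mem_range, Finset.mem_insert, Finset.mem_Icc]; omega
      have h2 : (∑ m ∈ range W, m) * 2 = W * (W-1) := Finset.sum_range_id_mul_two W
      rw [h1, Finset.sum_insert (by simp)] at h2
      have h3 : ((∑ m ∈ Icc 1 (W-1), m : ℕ):ℝ) * 2 = (W:ℝ) * ((W:ℝ)-1) := by
        have := congrArg (fun x : ℕ => (x:ℝ)) h2
        push_cast [Nat.cast_sub hW] at this
        simpa using this
      rw [Nat.cast_sum] at h3
      linarith
    have hcard : ((Icc 1 (W-1)).card : ℝ) = (W:ℝ) - 1 := by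
      rw [Nat.card_Icc]
      push_cast [Nat.cast_sub hW]
      ring
    have : ∑ m ∈ Icc 1 (W-1), (1 - (m:ℝ)/W) * E
        = (((Icc 1 (W-1)).card : ℝ) - (∑ m ∈ Icc 1 (W-1), (m:ℝ))/W) * E := by
      rw [← Finset.sum_mul]
      congr 1
      rw [Finset.sum_sub_distrib, Finset.sum_const, Finset.sum_div]
      simp
    rw [this, hgauss, hcard]
    have : (W:ℝ) * ((W:ℝ)-1) / 2 / W = ((W:ℝ)-1)/2 := by
      field_simp
    rw [this]
    have : (W:ℝ) - 1 - ((W:ℝ)-1)/2 = ((W:ℝ)-1)/2 := by ring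
    rw [this]
  -- combine
  calc (∑ m ∈ Icc 1 (K-1), (ecoef (K+1-m) : ℝ))
      ≤ ∑ m ∈ Icc 1 (K-1), ((m:ℝ)/W * (ecoef (K+1-m):ℝ)
          + (if m < W then (1 - (m:ℝ)/W) * E else 0)) := Finset.sum_le_sum step2
    _ = (1/W) * (∑ m ∈ Icc 1 (K-1), (m:ℝ) * (ecoef (K+1-m):ℝ))
          + ∑ m ∈ Icc 1 (K-1), (if m < W then (1 - (m:ℝ)/W) * E else 0) := by
        rw [Finset.sum_add_distrib, Finset.mul_sum]
        congr 1
        apply Finset.sum_congr rfl; intros; ring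
    _ ≤ (1/W) * (((K:ℝ)+1) * E / 24) + ((W:ℝ)-1)/2 * E := by
        have h4 : (0:ℝ) ≤ 1/W := by positivity
        nlinarith [step1, step3]
    _ = (((K:ℝ)+1)/(24*W) + ((W:ℝ)-1)/2) * E := by
        field_simp


lemma coreF (K : ℕ) (hK : 1 ≤ K) :
    (∑ m ∈ Icc 1 (K-1), (ecoef (K+1-m) : ℝ)) ≤
      91/(88*Real.pi) * Real.sqrt K * ecoef (K+1) := by
  have hpi : (0:ℝ) < Real.pi := Real.pi_pos
  have hpi4 : Real.pi ≤ 4 := Real.pi_le_four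
  have hE : (0:ℝ) ≤ (ecoef (K+1) : ℝ) := by positivity
  have hsqrt1 : (1:ℝ) ≤ Real.sqrt K := by
    rw [show (1:ℝ) = Real.sqrt 1 from (Real.sqrt_one).symm]
    exact Real.sqrt_le_sqrt (by exact_mod_cast hK)
  rcases Nat.lt_or_ge K 4 with hK4 | hK4
  · -- small case, W = 1
    refine (coreW K 1 hK le_rfl).trans ?_
    apply mul_le_mul_of_nonneg_right _ hE
    simp only [Nat.cast_one]
    have h1 : ((K:ℝ)+1)/(24*1) + ((1:ℝ)-1)/2 = ((K:ℝ)+1)/24 := by norm_num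
    rw [h1]
    have h2 : ((K:ℝ)+1)/24 ≤ 1/6 := by
      have : (K:ℝ) ≤ 3 := by exact_mod_cast Nat.lt_succ_iff.mp hK4
      linarith
    have h3 : (1:ℝ)/6 ≤ 91/(88*Real.pi) := by
      rw [div_le_div_iff₀ (by norm_num) (by positivity)]
      nlinarith
    calc ((K:ℝ)+1)/24 ≤ 1/6 := h2
      _ ≤ 91/(88*Real.pi) := h3
      _ ≤ 91/(88*Real.pi) * Real.sqrt K := by
          nlinarith [hsqrt1, div_pos (by norm_num : (0:ℝ) < 91) (by positivity : (0:ℝ) < 88*Real.pi)]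
  · -- large case
    set s : ℝ := Real.sqrt (((K:ℝ)+1)/12) with hs
    have hs0 : 0 < s := Real.sqrt_pos.mpr (by positivity)
    have hs2 : s^2 = ((K:ℝ)+1)/12 := Real.sq_sqrt (by positivity)
    set W : ℕ := ⌈s⌉₊ with hWdef
    have hW1 : 1 ≤ W := by
      rw [hWdef]; exact Nat.one_le_iff_ne_zero.mpr (by positivity)
    have hWs : s ≤ (W:ℝ) := Nat.le_ceil s
    have hWx : (W:ℝ) < s + 1 := Nat.ceil_lt_add_one hs0.le
    refine (coreW K W hK hW1).trans ?_
    apply mul_le_mul_of_nonneg_right _ hE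
    have hKr : ((K:ℝ)+1) = 12 * s^2 := by rw [hs2]; ring
    have hb1 : ((K:ℝ)+1)/(24*W) ≤ s/2 := by
      rw [hKr]
      rw [div_le_div_iff₀ (by positivity) (by norm_num)]
      nlinarith [hWs, hs0]
    have hb2 : ((W:ℝ)-1)/2 ≤ s/2 := by linarith
    have hfin : s ≤ 91/(88*Real.pi) * Real.sqrt K := by
      have hpilt : Real.pi < 3.15 := Real.pi_lt_d2
      have hc : 91/(88*Real.pi) * Real.sqrt K
          = Real.sqrt ((91/(88*Real.pi))^2 * K) := by
        rw [Real.sqrt_mul (by positivity), Real.sqrt_sq (by positivity)]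
      rw [hc, hs]
      apply Real.sqrt_le_sqrt
      rw [div_pow, div_mul_eq_mul_div, div_le_div_iff₀ (by norm_num) (by positivity)]
      have hK4r : (4:ℝ) ≤ (K:ℝ) := by exact_mod_cast hK4
      have hpisq : Real.pi^2 ≤ 9.9225 := by nlinarith [hpilt, hpi]
      have h7 : ((K:ℝ)+1) * Real.pi^2 ≤ ((K:ℝ)+1) * 9.9225 :=
        mul_le_mul_of_nonneg_left hpisq (by positivity)
      nlinarith [h7, hK4r]
    calc ((K:ℝ)+1)/(24*W) + ((W:ℝ)-1)/2 ≤ s/2 + s/2 := add_le_add hb1 hb2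
      _ = s := by ring
      _ ≤ 91/(88*Real.pi) * Real.sqrt K := hfin



lemma dcoef_eq {n : ℤ} (h : -1 ≤ n) : dcoef n = (ecoef (n+1).toNat : ℤ) := by
  rw [dcoef, if_pos (by omega)]
  rw [ecoef]
  push_cast [pcard]
  rfl

lemma dcoef_eq_zero {n : ℤ} (h : n < -1) : dcoef n = 0 := by
  rw [dcoef, if_neg (by omega)]

lemma dcoef_nonneg (n : ℤ) : 0 ≤ dcoef n := by
  rcases lt_or_ge n (-1) with h | h
  · rw [dcoef_eq_zero h]
  · rw [dcoef_eq h]; positivity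

lemma dcoef_zero : dcoef 0 = 24 := by
  rw [dcoef_eq (by norm_num)]
  norm_num [ecoef_one]

lemma dcoef_negone : dcoef (-1) = 1 := by
  rw [dcoef_eq (by norm_num)]
  norm_num [ecoef_zero]

lemma dcoef_pos {n : ℤ} (h : -1 ≤ n) : 1 ≤ dcoef n := by
  rw [dcoef_eq h]
  exact_mod_cast ecoef_pos _

lemma sum_transfer {k : ℤ} (hk : 1 ≤ k) :
    ∑ t ∈ Icc (1:ℤ) (k-1), dcoef (k-t)
      = ((∑ t ∈ Icc (1:ℕ) (k.toNat - 1), ecoef (k.toNat + 1 - t) : ℕ) : ℤ) := by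
  rw [Nat.cast_sum]
  apply Finset.sum_nbij' (fun t : ℤ => t.toNat) (fun t : ℕ => (t:ℤ))
  · intro t ht; simp only [Finset.mem_Icc] at ht ⊢; omega
  · intro t ht; simp only [Finset.mem_Icc] at ht ⊢; omega
  · intro t ht; simp only [Finset.mem_Icc] at ht; omega
  · intro t ht; simp only [Finset.mem_Icc] at ht; omega
  · intro t ht
    simp only [Finset.mem_Icc] at ht
    rw [dcoef_eq (by omega)]
    have harg : (k - t + 1).toNat = k.toNat + 1 - t.toNat := by omega
    rw [harg]




theorem stmt9 (m k : ℤ) (hm : 6 ≤ m) (hk1 : 1 ≤ k) (hkm : k < m) :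
    (cF0 m (m - k) : ℝ) ≤
      (1 + 25 / (dcoef k : ℝ) + (91 / (88 * Real.pi)) * Real.sqrt k) *
        (((m - k) * dcoef k * dcoef 0 : ℤ) : ℝ) := by
  have hℓ1 : (1:ℤ) ≤ m - k := by omega
  have hℓ0 : (0:ℤ) < m - k := by omega
  have hdk1 : 1 ≤ dcoef k := dcoef_pos (by omega)
  have hdkR : (1:ℝ) ≤ (dcoef k : ℝ) := by exact_mod_cast hdk1
  set R : ℤ := (m+1)/(m-k) with hRdef
  have hR1 : 1 ≤ R := by
    rw [hRdef, Int.le_ediv_iff_mul_le hℓ0]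
    omega
  set T : ℤ := ∑ t ∈ Icc (1:ℤ) (k-1), dcoef (k-t) with hTdef
  -- split off r = 1
  have hsplit : Finset.Icc (1:ℤ) R = insert 1 (Finset.Icc 2 R) := by
    ext x; simp only [Finset.mem_Icc, Finset.mem_insert]; omega
  have hS : (∑ r ∈ Finset.Icc (1:ℤ) R, dcoef (m - r * (m-k)))
      = dcoef k + ∑ r ∈ Finset.Icc (2:ℤ) R, dcoef (m - r * (m-k)) := by
    rw [hsplit, Finset.sum_insert (by simp)]
    congr 2
    ring
  -- bound the tail
  have htail : (∑ r ∈ Finset.Icc (2:ℤ) R, dcoef (m - r * (m-k)))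
      ≤ ∑ t ∈ Icc (1:ℤ) (k+1), dcoef (k - t) := by
    have h1 : (∑ r ∈ Finset.Icc (2:ℤ) R, dcoef (m - r * (m-k)))
        = ∑ r ∈ (Finset.Icc (2:ℤ) R).filter (fun r => (r-1)*(m-k) ≤ k+1),
            dcoef (k - (r-1)*(m-k)) := by
      rw [Finset.sum_filter_of_ne]
      · apply Finset.sum_congr rfl
        intro r _
        congr 1
        ring
      · intro r hr hne
        by_contra hgt
        push_neg at hgt
        apply hne
        apply dcoef_eq_zero
        have harg : m - r*(m-k) = k - (r-1)*(m-k) := by ring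
        omega
    rw [h1]
    rw [← Finset.sum_image (g := fun r : ℤ => (r-1)*(m-k))
      (f := fun t => dcoef (k - t)) ?hinj]
    case hinj =>
      intro x _ y _ hxy
      have := mul_right_cancel₀ (by omega : m - k ≠ 0) hxy
      omega
    apply Finset.sum_le_sum_of_subset_of_nonneg
    · intro t ht
      simp only [Finset.mem_image, Finset.mem_filter, Finset.mem_Icc] at ht
      obtain ⟨r, ⟨⟨hr2, hrR⟩, hle⟩, rfl⟩ := ht
      simp only [Finset.mem_Icc]
      constructor
      · have h11 : (1:ℤ)*1 ≤ (r-1)*(m-k) :=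
          mul_le_mul (by omega) (by omega) (by norm_num) (by omega)
        omega
      · exact hle
    · intro t _ _
      exact dcoef_nonneg _
  -- split the top interval
  have hsplit2 : (∑ t ∈ Icc (1:ℤ) (k+1), dcoef (k - t)) = T + 25 := by
    have h2 : Icc (1:ℤ) (k+1) = insert (k+1) (insert k (Icc 1 (k-1))) := by
      ext x; simp only [Finset.mem_Icc, Finset.mem_insert]; omega
    rw [h2, Finset.sum_insert (by simp only [Finset.mem_insert, Finset.mem_Icc]; omega),
      Finset.sum_insert (by simp only [Finset.mem_Icc]; omega)]
    have e1 : k - (k+1) = -1 := by ring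
    have e2 : k - k = 0 := by ring
    rw [e1, e2, dcoef_negone, dcoef_zero, hTdef]
    ring
  -- integer bound for the full sum
  have hZ : (∑ r ∈ Finset.Icc (1:ℤ) R, dcoef (m - r * (m-k))) ≤ dcoef k + T + 25 := by
    rw [hS]
    have := htail.trans (le_of_eq hsplit2)
    omega
  -- real bound for T
  have hTreal : (T:ℝ) ≤ 91/(88*Real.pi) * Real.sqrt k * (dcoef k : ℝ) := by
    have hknat : ((k.toNat : ℤ)) = k := Int.toNat_of_nonneg (by omega)
    have h3 : T = ((∑ t ∈ Icc (1:ℕ) (k.toNat - 1), ecoef (k.toNat + 1 - t) : ℕ) : ℤ) :=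
      sum_transfer hk1
    have h4 : (dcoef k : ℝ) = (ecoef (k.toNat + 1) : ℝ) := by
      rw [dcoef_eq (by omega)]
      have : (k+1).toNat = k.toNat + 1 := by omega
      rw [this]
      push_cast
      ring
    have h5 : Real.sqrt k = Real.sqrt (k.toNat) := by
      congr 1
      exact_mod_cast hknat.symm
    rw [h4, h5]
    have h6 : (T:ℝ) = ∑ t ∈ Icc (1:ℕ) (k.toNat - 1), (ecoef (k.toNat + 1 - t) : ℝ) := by
      rw [h3]
      push_cast
      rfl
    rw [h6]
    exact coreF k.toNat (by omega)
  -- final assembly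
  have hmkR : (0:ℝ) < (m:ℝ) - (k:ℝ) := by
    have : ((m - k : ℤ) : ℝ) = (m:ℝ) - k := by push_cast; ring
    rw [← this]
    exact_mod_cast hℓ0
  have hcF : (cF0 m (m-k) : ℝ)
      = ((m:ℝ) - k) * 24 * ((∑ r ∈ Finset.Icc (1:ℤ) R, dcoef (m - r * (m-k))) : ℝ) := by
    simp only [cF0, dcoef_zero]
    push_cast
    ring
  have hdkne : (dcoef k : ℝ) ≠ 0 := by linarith
  have hsq : (0:ℝ) ≤ Real.sqrt k := Real.sqrt_nonneg _
  have hc0 : (0:ℝ) ≤ 91/(88*Real.pi) := by positivity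
  have hS1 : ((∑ r ∈ Finset.Icc (1:ℤ) R, dcoef (m - r * (m-k))) : ℝ)
      ≤ (dcoef k : ℝ) + (T:ℝ) + 25 := by exact_mod_cast hZ
  have hS2 : ((∑ r ∈ Finset.Icc (1:ℤ) R, dcoef (m - r * (m-k))) : ℝ)
      ≤ (dcoef k : ℝ) + 91/(88*Real.pi) * Real.sqrt k * (dcoef k : ℝ) + 25 := by
    linarith [hTreal]
  have hRHS : (1 + 25 / (dcoef k : ℝ) + (91 / (88 * Real.pi)) * Real.sqrt k) *
        (((m - k) * dcoef k * dcoef 0 : ℤ) : ℝ)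
      = ((m:ℝ) - k) * 24 *
        ((dcoef k : ℝ) + 91/(88*Real.pi) * Real.sqrt k * (dcoef k : ℝ) + 25) := by
    rw [dcoef_zero]
    push_cast
    field_simp
    ring
  rw [hcF, hRHS]
  apply mul_le_mul_of_nonneg_left hS2
  nlinarith [hmkR]
end
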